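/- arXiv:math/0102058 — 6 statements merged into one kernel-verified Lean document; each statement's English description precedes it below -/
import Mathlib

section
/- For infinite cardinals κ < λ, Pr(λ, κ) implies Ps(λ, κ). -/
open Cardinal Set

abbrev Ordi := Ordinal.{0}
abbrev Cardi := Cardinal.{0}

/-- the set of ordinals `s` has order type `δ`. -/
def OtpEq (s : Set Ordi) (δ : Ordi) : Prop := Nonempty (s ≃o Set.Iio δ)

/-- `f` is a partial function from `λ` to `λ`. -/
def PFDomRan (lam : Cardi) (f : Ordi →. Ordi) : Prop :=
  f.Dom ⊆ Set.Iio lam.ord ∧ ∀ a b, b ∈ f a → b < lam.ord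

/-- `f` is strictly increasing (on its domain). -/
def PFInc (f : Ordi →. Ordi) : Prop :=
  ∀ a b c d, c ∈ f a → d ∈ f b → a < b → c < d

/-- `f` is one-to-one (on its domain). -/
def PFInj (f : Ordi →. Ordi) : Prop :=
  ∀ a b c, c ∈ f a → c ∈ f b → a = b

/-- the partial function `g` extends the partial function `f`. -/
def PFLe (f g : Ordi →. Ordi) : Prop := ∀ a b, b ∈ f a → b ∈ g a

/-- the total function `g` extends the partial function `f`. -/
def TotalExt (g : Ordi → Ordi) (f : Ordi →. Ordi) : Prop :=
  ∀ a b, b ∈ f a → g a = b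

/-- `g` is a total function from `λ` to `λ`. -/
def TotalFn (lam : Cardi) (g : Ordi → Ordi) : Prop :=
  ∀ a < lam.ord, g a < lam.ord

/-- `g` is injective as a function from `λ` to `λ`. -/
def TotalInj (lam : Cardi) (g : Ordi → Ordi) : Prop :=
  Set.InjOn g (Set.Iio lam.ord)

def Pr (lam kap : Cardi) : Prop :=
  ∃ F : Set (Ordi →. Ordi),
    #F ≤ Cardinal.lift.{1} lam ∧
    (∀ f ∈ F, PFDomRan lam f ∧ PFInc f ∧ OtpEq f.Dom kap.ord) ∧
    (∀ f ∈ F, ∀ g ∈ F, f ≠ g →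
      #(↥(f.Dom ∩ g.Dom)) < Cardinal.lift.{1} kap) ∧
    (∀ g : Ordi →. Ordi, PFDomRan lam g → PFInc g →
      #(↥g.Dom) = Cardinal.lift.{1} lam → ∃ f ∈ F, PFLe f g)

def Ps (lam kap : Cardi) : Prop :=
  ∃ F : Set (Ordi →. Ordi),
    #F ≤ Cardinal.lift.{1} lam ∧
    (∀ f ∈ F, PFDomRan lam f ∧ PFInc f ∧ OtpEq f.Dom kap.ord) ∧
    (∀ f ∈ F, ∀ g ∈ F, f ≠ g →
      #(↥(f.Dom ∩ g.Dom)) < Cardinal.lift.{1} kap) ∧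
    (∀ g : Ordi → Ordi, TotalFn lam g → TotalInj lam g →
      ∃ f ∈ F, TotalExt g f)

def Pr' (lam : Cardi) (δ : Ordi) : Prop :=
  ∃ F : Set (Ordi →. Ordi),
    #F ≤ Cardinal.lift.{1} lam ∧
    (∀ f ∈ F, PFDomRan lam f ∧ PFInj f ∧ OtpEq f.Dom δ) ∧
    (∀ f ∈ F, ∀ g ∈ F, f ≠ g →
      (∃ c ∈ f.Dom, ∀ x ∈ f.Dom ∩ g.Dom, x < c) ∧
      (∃ c ∈ g.Dom, ∀ x ∈ f.Dom ∩ g.Dom, x < c)) ∧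
    (∀ g : Ordi →. Ordi, PFDomRan lam g → PFInj g →
      #(↥g.Dom) = Cardinal.lift.{1} lam → ∃ f ∈ F, PFLe f g)

def Ps' (lam : Cardi) (δ : Ordi) : Prop :=
  ∃ F : Set (Ordi →. Ordi),
    #F ≤ Cardinal.lift.{1} lam ∧
    (∀ f ∈ F, PFDomRan lam f ∧ PFInj f ∧ OtpEq f.Dom δ) ∧
    (∀ f ∈ F, ∀ g ∈ F, f ≠ g →
      (∃ c ∈ f.Dom, ∀ x ∈ f.Dom ∩ g.Dom, x < c) ∧
      (∃ c ∈ g.Dom, ∀ x ∈ f.Dom ∩ g.Dom, x < c)) ∧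
    (∀ g : Ordi → Ordi, TotalFn lam g → TotalInj lam g →
      ∃ f ∈ F, TotalExt g f)

def Pr3 (chi lam mu : Cardi) (α : Ordi) : Prop :=
  ∃ F : Set (Ordi →. Ordi),
    #F ≤ Cardinal.lift.{1} chi ∧
    (∀ f ∈ F, f.Dom ⊆ Set.Iio mu.ord ∧ (∀ a b, b ∈ f a → b < lam.ord) ∧
      OtpEq f.Dom α) ∧
    (∀ g : Ordi → Ordi, (∀ a < mu.ord, g a < lam.ord) →
      ∃ f ∈ F, TotalExt g f)

/-- weak embedding of graphs: injective, maps edges to edges. -/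
def WeakEmb {V W : Type*} (G : SimpleGraph V) (H : SimpleGraph W) (f : V → W) : Prop :=
  Function.Injective f ∧ ∀ a b, G.Adj a b → H.Adj (f a) (f b)

/-- strong embedding of graphs: injective, maps edges to edges and non-edges to non-edges. -/
def StrongEmb {V W : Type*} (G : SimpleGraph V) (H : SimpleGraph W) (f : V → W) : Prop :=
  Function.Injective f ∧ ∀ a b, G.Adj a b ↔ H.Adj (f a) (f b)

/-- the complete `(θ, κ)`-bipartite graph cannot be weakly embedded into `G`. -/
def NoKbip {V : Type} (G : SimpleGraph V) (θ κ : Cardi) : Prop :=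
  ¬ ∃ A B : Set V, Disjoint A B ∧ #A = θ ∧ #B = κ ∧
      ∀ a ∈ A, ∀ b ∈ B, G.Adj a b

/-- `G` is bipartite. -/
def IsBipartite {V : Type*} (G : SimpleGraph V) : Prop :=
  ∃ s : Set V, ∀ a b, G.Adj a b → (a ∈ s ↔ b ∉ s)

/-- `♣_S` where `S` is a set of ordinals below `λ`. -/
def Clubsuit (lam : Cardi) (S : Set Ordi) : Prop :=
  ∃ A : Ordi → Set Ordi,
    (∀ δ ∈ S, Order.IsSuccLimit δ →
      A δ ⊆ Set.Iio δ ∧ (∀ b < δ, ∃ x ∈ A δ, b < x)) ∧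
    (∀ X ⊆ Set.Iio lam.ord, (∀ b < lam.ord, ∃ x ∈ X, b < x) →
      ∃ δ ∈ S, Order.IsSuccLimit δ ∧ A δ ⊆ X)

noncomputable def Ubd (kap lam : Cardi) : Cardi :=
  sInf { c : Cardi | ∃ P : Set (Set Ordi), #P = Cardinal.lift.{1} c ∧
    (∀ A ∈ P, A ⊆ Set.Iio lam.ord ∧ #(↥A) = Cardinal.lift.{1} kap) ∧
    ∀ f : Ordi → Ordi, (∀ i < kap.ord, f i < lam.ord) →
      ∃ A ∈ P, ∀ b < kap.ord, ∃ i, b ≤ i ∧ i < kap.ord ∧ f i ∈ A }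

section AuxMono

open Ordinal

private lemma isRegular_lift_aux {ν : Cardi} (h : ν.IsRegular) :
    (Cardinal.lift.{1} ν).IsRegular := by
  constructor
  · have h1 : Cardinal.lift.{1} ℵ₀ ≤ Cardinal.lift.{1} ν := Cardinal.lift_le.2 h.1
    simpa using h1
  · rw [← Cardinal.lift_ord, ← Ordinal.lift_cof]
    exact Cardinal.lift_le.2 h.2

private lemma prune_lemma (ν : Cardi) (C : Set Ordi) (k : Ordi → Ordi)
    (hC : Cardinal.lift.{1} ν ≤ #C) :
    Cardinal.lift.{1} ν ≤
      #{a ∈ C | #{b ∈ C | k b < k a} < Cardinal.lift.{1} ν} := by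
  set C' := {a ∈ C | #{b ∈ C | k b < k a} < Cardinal.lift.{1} ν} with hC'def
  by_cases h : (C \ C').Nonempty
  · obtain ⟨m, hm, hmin⟩ := Ordinal.lt_wf.has_min (k '' (C \ C')) (h.image k)
    obtain ⟨a₀, ha₀, rfl⟩ := hm
    have hsub : {b ∈ C | k b < k a₀} ⊆ C' := by
      intro b hb
      by_contra hbn
      exact hmin (k b) ⟨b, ⟨hb.1, hbn⟩, rfl⟩ hb.2
    have hbig : ¬ #{b ∈ C | k b < k a₀} < Cardinal.lift.{1} ν :=
      fun hlt => ha₀.2 ⟨ha₀.1, hlt⟩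
    exact (not_lt.1 hbig).trans (Cardinal.mk_le_mk_of_subset hsub)
  · have hsub : C ⊆ C' := by
      intro a ha
      by_contra han
      exact h ⟨a, ha, han⟩
    exact hC.trans (Cardinal.mk_le_mk_of_subset hsub)

private lemma biUnion_small (ν : Cardi) (hreg : ν.IsRegular) (s : Set Ordi)
    (A : Ordi → Set Ordi) (hs : #s < Cardinal.lift.{1} ν)
    (hA : ∀ y ∈ s, #(A y) < Cardinal.lift.{1} ν) :
    #(⋃ y ∈ s, A y) < Cardinal.lift.{1} ν := by
  have hregl := isRegular_lift_aux hreg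
  refine lt_of_le_of_lt (Cardinal.mk_biUnion_le A s) ?_
  exact Cardinal.mul_lt_of_lt hregl.1 hs
    (Cardinal.iSup_lt_of_isRegular hregl hs fun i => hA i i.2)

private lemma records_lemma (ν : Cardi) (hreg : ν.IsRegular) (C : Set Ordi)
    (g : Ordi → Ordi) (hinj : Set.InjOn g C)
    (hi1 : ∀ x ∈ C, #{b ∈ C | b < x} < Cardinal.lift.{1} ν)
    (hi2 : ∀ x ∈ C, #{b ∈ C | g b < g x} < Cardinal.lift.{1} ν)
    (hC : Cardinal.lift.{1} ν ≤ #C) :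
    ∃ R ⊆ C, Cardinal.lift.{1} ν ≤ #R ∧ StrictMonoOn g R := by
  have hℵ : (ℵ₀ : Cardinal.{1}) ≤ Cardinal.lift.{1} ν := (isRegular_lift_aux hreg).1
  have hν1 : (1 : Cardinal.{1}) < Cardinal.lift.{1} ν :=
    lt_of_lt_of_le Cardinal.one_lt_aleph0 hℵ
  set R := {x ∈ C | ∀ y ∈ C, y < x → g y < g x} with hRdef
  have hRC : R ⊆ C := Set.sep_subset _ _
  refine ⟨R, hRC, ?_, fun x hx y hy hxy => hy.2 x hx.1 hxy⟩
  have hub : ∀ x ∈ C, ∃ r ∈ R, x ≤ r := by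
    intro x hx
    by_contra hcon
    push_neg at hcon
    set T := sSup (g '' {y ∈ C | y ≤ x}) with hTdef
    haveI hsml : Small.{0} ({y ∈ C | y ≤ x} : Set Ordi) :=
      @small_subset Ordi (Set.Iic x) _ (fun y hy => hy.2) (Ordinal.small_Iic x)
    have hbdd : BddAbove (g '' {y ∈ C | y ≤ x}) := Ordinal.bddAbove_of_small
    have hTle : ∀ a, a ∈ C → g a ≤ T := by
      intro a
      induction a using Ordinal.induction with
      | h a IH =>
        intro ha
        rcases le_or_gt a x with hax | hax
        · exact le_csSup hbdd ⟨a, ⟨ha, hax⟩, rfl⟩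
        · have haR : a ∉ R := fun hr => absurd (hcon a hr) (not_lt.2 hax.le)
          have hbad : ∃ y ∈ C, y < a ∧ ¬ g y < g a := by
            by_contra hyn
            push_neg at hyn
            exact haR ⟨ha, fun y hy hlt => hyn y hy hlt⟩
          obtain ⟨y, hyC, hya, hgy⟩ := hbad
          exact le_trans (le_of_not_gt hgy) (IH y hya hyC)
    have hidx : #{y ∈ C | y ≤ x} < Cardinal.lift.{1} ν := by
      have hsub : {y ∈ C | y ≤ x} ⊆ {y ∈ C | y < x} ∪ {x} := by
        intro y hy
        rcases lt_or_eq_of_le hy.2 with h' | h'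
        · exact Or.inl ⟨hy.1, h'⟩
        · exact Or.inr (by simp [h'])
      refine lt_of_le_of_lt
        ((Cardinal.mk_le_mk_of_subset hsub).trans (Cardinal.mk_union_le _ _)) ?_
      have h1 := hi1 x hx
      have h2 : #({x} : Set Ordi) < Cardinal.lift.{1} ν := by
        rw [Cardinal.mk_singleton]; exact hν1
      exact Cardinal.add_lt_of_lt hℵ h1 h2
    have hpiece : ∀ y ∈ {y ∈ C | y ≤ x},
        #{a ∈ C | g a ≤ g y} < Cardinal.lift.{1} ν := by
      intro y hy
      have hsub : {a ∈ C | g a ≤ g y} ⊆ {a ∈ C | g a < g y} ∪ {y} := by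
        intro a ha
        rcases lt_or_eq_of_le ha.2 with h' | h'
        · exact Or.inl ⟨ha.1, h'⟩
        · exact Or.inr (by simp [hinj ha.1 hy.1 h'])
      refine lt_of_le_of_lt
        ((Cardinal.mk_le_mk_of_subset hsub).trans (Cardinal.mk_union_le _ _)) ?_
      have h2 : #({y} : Set Ordi) < Cardinal.lift.{1} ν := by
        rw [Cardinal.mk_singleton]; exact hν1
      exact Cardinal.add_lt_of_lt hℵ (hi2 y hy.1) h2
    have hbig : ¬ C ⊆ ⋃ y ∈ {y ∈ C | y ≤ x}, {a ∈ C | g a ≤ g y} := by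
      intro hsubset
      have := (hC.trans (Cardinal.mk_le_mk_of_subset hsubset))
      exact absurd this (not_le.2 (biUnion_small ν hreg _ _ hidx hpiece))
    obtain ⟨astar, haC, hanot⟩ := Set.not_subset.1 hbig
    have hgt : ∀ y ∈ C, y ≤ x → g y < g astar := by
      intro y hyC hyx
      by_contra hge
      exact hanot (Set.mem_biUnion ⟨hyC, hyx⟩ ⟨haC, le_of_not_gt hge⟩)
    have hTle2 : T ≤ g astar := by
      have hne : (g '' {y ∈ C | y ≤ x}).Nonempty := ⟨g x, ⟨x, ⟨hx, le_rfl⟩, rfl⟩⟩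
      refine csSup_le hne ?_
      rintro t ⟨y, ⟨hyC, hyx⟩, rfl⟩
      exact (hgt y hyC hyx).le
    have hCsub : C ⊆ {b ∈ C | g b < g astar} ∪ {astar} := by
      intro a ha
      by_cases h' : a = astar
      · exact Or.inr (by simp [h'])
      · refine Or.inl ⟨ha, lt_of_le_of_ne ((hTle a ha).trans hTle2) ?_⟩
        exact fun he => h' (hinj ha haC he)
    have : #C < Cardinal.lift.{1} ν := by
      refine lt_of_le_of_lt
        ((Cardinal.mk_le_mk_of_subset hCsub).trans (Cardinal.mk_union_le _ _)) ?_
      have h2 : #({astar} : Set Ordi) < Cardinal.lift.{1} ν := by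
        rw [Cardinal.mk_singleton]; exact hν1
      exact Cardinal.add_lt_of_lt hℵ (hi2 astar haC) h2
    exact absurd hC (not_le.2 this)
  by_contra hRsize
  push_neg at hRsize
  have hcov : C ⊆ ⋃ r ∈ R, {a ∈ C | a ≤ r} := by
    intro a ha
    obtain ⟨r, hr, har⟩ := hub a ha
    exact Set.mem_biUnion hr ⟨ha, har⟩
  have hpiece : ∀ r ∈ R, #{a ∈ C | a ≤ r} < Cardinal.lift.{1} ν := by
    intro r hr
    have hsub : {a ∈ C | a ≤ r} ⊆ {a ∈ C | a < r} ∪ {r} := by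
      intro a ha
      rcases lt_or_eq_of_le ha.2 with h' | h'
      · exact Or.inl ⟨ha.1, h'⟩
      · exact Or.inr (by simp [h'])
    refine lt_of_le_of_lt
      ((Cardinal.mk_le_mk_of_subset hsub).trans (Cardinal.mk_union_le _ _)) ?_
    have h2 : #({r} : Set Ordi) < Cardinal.lift.{1} ν := by
      rw [Cardinal.mk_singleton]; exact hν1
    exact Cardinal.add_lt_of_lt hℵ (hi1 r (hRC hr)) h2
  have := hC.trans (Cardinal.mk_le_mk_of_subset hcov)
  exact absurd this (not_le.2 (biUnion_small ν hreg _ _ hRsize hpiece))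

private lemma chain_lemma (ν : Cardi) (hreg : ν.IsRegular) (C : Set Ordi)
    (g : Ordi → Ordi) (hinj : Set.InjOn g C) (hC : Cardinal.lift.{1} ν ≤ #C) :
    ∃ D ⊆ C, Cardinal.lift.{1} ν ≤ #D ∧ StrictMonoOn g D := by
  set C₁ := {a ∈ C | #{b ∈ C | g b < g a} < Cardinal.lift.{1} ν} with hC₁def
  have hC₁C : C₁ ⊆ C := Set.sep_subset _ _
  have hC₁big : Cardinal.lift.{1} ν ≤ #C₁ := prune_lemma ν C g hC
  set C₂ := {a ∈ C₁ | #{b ∈ C₁ | b < a} < Cardinal.lift.{1} ν} with hC₂def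
  have hC₂C₁ : C₂ ⊆ C₁ := Set.sep_subset _ _
  have hC₂big : Cardinal.lift.{1} ν ≤ #C₂ := prune_lemma ν C₁ (fun b => b) hC₁big
  obtain ⟨R, hRC₂, hRbig, hRmono⟩ := records_lemma ν hreg C₂ g
    (hinj.mono (hC₂C₁.trans hC₁C))
    (fun x hx => by
      refine lt_of_le_of_lt (Cardinal.mk_le_mk_of_subset ?_) hx.2
      intro b hb
      exact ⟨hC₂C₁ hb.1, hb.2⟩)
    (fun x hx => by
      refine lt_of_le_of_lt (Cardinal.mk_le_mk_of_subset ?_) (hC₂C₁ hx).2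
      intro b hb
      exact ⟨hC₁C (hC₂C₁ hb.1), hb.2⟩)
    hC₂big
  exact ⟨R, hRC₂.trans (hC₂C₁.trans hC₁C), hRbig, hRmono⟩

private lemma count_lemma (lam : Cardi) (hlam : ℵ₀ ≤ lam) (g : Ordi → Ordi)
    (hran : ∀ a < lam.ord, g a < lam.ord) (hcof : lam.ord.cof < lam)
    (d : Cardi) (hd : d < lam) :
    ∃ c < lam.ord, Cardinal.lift.{1} d < #{a : Ordi | a ≤ c ∧ g a ≤ c} := by
  by_contra hcon
  push_neg at hcon
  obtain ⟨fs, hfs⟩ := Ordinal.exists_fundamental_sequence lam.ord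
  have hfslt : ∀ i (hi : i < lam.ord.cof.ord), fs i hi < lam.ord := by
    intro i hi
    have h := Ordinal.lt_blsub fs i hi
    rwa [hfs.2.2] at h
  set A : ↥(Set.Iio lam.ord.cof.ord) → Set Ordi :=
    fun i => {a : Ordi | a ≤ fs i.1 i.2 ∧ g a ≤ fs i.1 i.2} with hA
  have hcover : (Set.Iio lam.ord : Set Ordi) ⊆ ⋃ i, A i := by
    intro x hx
    have h1 : max x (g x) < lam.ord := max_lt hx (hran x hx)
    obtain ⟨i, hi, hle⟩ := Ordinal.lt_blsub_iff.1 (by rw [hfs.2.2]; exact h1)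
    exact Set.mem_iUnion.2 ⟨⟨i, hi⟩,
      le_trans (le_max_left _ _) hle, le_trans (le_max_right _ _) hle⟩
  have hsup : ⨆ i, #(A i) ≤ Cardinal.lift.{1} d := by
    rcases isEmpty_or_nonempty (Set.Iio lam.ord.cof.ord : Set Ordi) with he | hne
    · rw [ciSup_of_empty]
      exact bot_le
    · exact ciSup_le' fun i => hcon _ (hfslt i.1 i.2)
  have hcard : Cardinal.lift.{1} lam ≤ Cardinal.lift.{1} (lam.ord.cof * d) := by
    have h1 : #(Set.Iio lam.ord : Set Ordi) = Cardinal.lift.{1} lam := by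
      rw [Ordinal.mk_Iio_ordinal, Cardinal.card_ord]
    have h2 : #(Set.Iio lam.ord.cof.ord : Set Ordi) = Cardinal.lift.{1} lam.ord.cof := by
      rw [Ordinal.mk_Iio_ordinal, Cardinal.card_ord]
    calc Cardinal.lift.{1} lam = #(Set.Iio lam.ord : Set Ordi) := h1.symm
      _ ≤ #(⋃ i, A i) := Cardinal.mk_le_mk_of_subset hcover
      _ ≤ #(Set.Iio lam.ord.cof.ord : Set Ordi) * ⨆ i, #(A i) := Cardinal.mk_iUnion_le A
      _ ≤ Cardinal.lift.{1} lam.ord.cof * Cardinal.lift.{1} d := by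
          rw [h2]; exact mul_le_mul_right hsup _
      _ = Cardinal.lift.{1} (lam.ord.cof * d) := (Cardinal.lift_mul _ _).symm
  have : lam ≤ lam.ord.cof * d := Cardinal.lift_le.1 hcard
  exact absurd this (not_le.2 (Cardinal.mul_lt_of_lt hlam hcof hd))

private lemma step_lemma (lam : Cardi) (hlam : ℵ₀ ≤ lam) (hcof : lam.ord.cof < lam)
    (g : Ordi → Ordi) (hran : ∀ a < lam.ord, g a < lam.ord)
    (hinj : Set.InjOn g (Set.Iio lam.ord)) (b : Ordi) (hb : b < lam.ord) :
    ∃ b' : Ordi, b' < lam.ord ∧ b < b' ∧ ∃ D : Set Ordi, D ⊆ Set.Ioo b b' ∧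
      (∀ a ∈ D, g a ∈ Set.Ioo b b') ∧ StrictMonoOn g D ∧
      Cardinal.lift.{1} (Order.succ (b.card ⊔ ℵ₀)) ≤ #D := by
  set ν := Order.succ (b.card ⊔ ℵ₀) with hνdef
  have hνreg : ν.IsRegular := Cardinal.isRegular_succ (le_max_right _ _)
  have hℵν : (ℵ₀ : Cardinal.{1}) ≤ Cardinal.lift.{1} ν := (isRegular_lift_aux hνreg).1
  have hbcard : b.card ⊔ ℵ₀ < lam := by
    have h1 : b.card < lam := Cardinal.lt_ord.1 hb
    have h2 : ℵ₀ < lam :=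
      lt_of_le_of_lt (Ordinal.aleph0_le_cof.2 (Cardinal.isSuccLimit_ord hlam)) hcof
    exact max_lt h1 h2
  have hνlam : ν < lam := by
    rcases lt_or_eq_of_le (Order.succ_le_of_lt hbcard) with h | h
    · exact h
    · exfalso
      have hr := Cardinal.isRegular_succ (le_max_right b.card ℵ₀)
      rw [h] at hr
      have : lam ≤ lam.ord.cof := hr.2
      exact absurd this (not_le.2 hcof)
  obtain ⟨c, hc, hE⟩ := count_lemma lam hlam g hran hcof ν hνlam
  set bad1 : Set Ordi := Set.Iic b with hbad1def
  set bad2 : Set Ordi := {a : Ordi | a < lam.ord ∧ g a ≤ b} with hbad2def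
  have hIic : #(Set.Iic b : Set Ordi) ≤ Cardinal.lift.{1} (b.card ⊔ ℵ₀) := by
    have he : (Set.Iic b : Set Ordi) = Set.Iio (Order.succ b) := (Order.Iio_succ b).symm
    rw [he, Ordinal.mk_Iio_ordinal]
    apply Cardinal.lift_le.2
    rw [Ordinal.card_succ]
    calc b.card + 1 ≤ (b.card ⊔ ℵ₀) + (b.card ⊔ ℵ₀) :=
          add_le_add (le_max_left _ _)
            (le_trans Cardinal.one_le_aleph0 (le_max_right _ _))
      _ = b.card ⊔ ℵ₀ := Cardinal.add_eq_self (le_max_right _ _)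
  have hbad1 : #bad1 < Cardinal.lift.{1} ν :=
    lt_of_le_of_lt hIic (Cardinal.lift_lt.2 (Order.lt_succ _))
  have hbad2 : #bad2 < Cardinal.lift.{1} ν := by
    have hinj2 : Function.Injective
        (fun a : bad2 => (⟨g a.1, a.2.2⟩ : (Set.Iic b : Set Ordi))) := by
      intro a1 a2 h12
      have : g a1.1 = g a2.1 := congrArg Subtype.val h12
      exact Subtype.ext (hinj a1.2.1 a2.2.1 this)
    exact lt_of_le_of_lt (le_trans (Cardinal.mk_le_of_injective hinj2) hIic)
      (Cardinal.lift_lt.2 (Order.lt_succ _))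
  set C : Set Ordi := {a : Ordi | a ≤ c ∧ g a ≤ c} \ (bad1 ∪ bad2) with hCdef
  have hCbig : Cardinal.lift.{1} ν ≤ #C := by
    by_contra h
    push_neg at h
    have hbadlt : #(bad1 ∪ bad2 : Set Ordi) < Cardinal.lift.{1} ν :=
      lt_of_le_of_lt (Cardinal.mk_union_le _ _) (Cardinal.add_lt_of_lt hℵν hbad1 hbad2)
    have hsub : {a : Ordi | a ≤ c ∧ g a ≤ c} ⊆ C ∪ (bad1 ∪ bad2) := by
      intro a ha
      by_cases hab : a ∈ bad1 ∪ bad2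
      · exact Or.inr hab
      · exact Or.inl ⟨ha, hab⟩
    have : #{a : Ordi | a ≤ c ∧ g a ≤ c} < Cardinal.lift.{1} ν :=
      lt_of_le_of_lt ((Cardinal.mk_le_mk_of_subset hsub).trans (Cardinal.mk_union_le _ _))
        (Cardinal.add_lt_of_lt hℵν h hbadlt)
    exact absurd hE (not_lt.2 this.le)
  have hCIio : C ⊆ Set.Iio lam.ord := fun a ha => lt_of_le_of_lt ha.1.1 hc
  obtain ⟨D, hDC, hDbig, hDmono⟩ := chain_lemma ν hνreg C g (hinj.mono hCIio) hCbig
  have hCne : C.Nonempty := by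
    rw [Set.nonempty_iff_ne_empty]
    intro he
    rw [he, Cardinal.mk_emptyCollection] at hCbig
    exact Cardinal.aleph0_ne_zero (le_zero_iff.1 (hℵν.trans hCbig))
  have hbc : b < c := by
    obtain ⟨a, ha⟩ := hCne
    have h1 : b < a := not_le.1 (fun hle => ha.2 (Or.inl hle))
    exact lt_of_lt_of_le h1 ha.1.1
  have hc1 : c + 1 < lam.ord := by
    rw [Ordinal.add_one_eq_succ]
    exact (Cardinal.isSuccLimit_ord hlam).succ_lt hc
  refine ⟨c + 1, hc1, lt_trans hbc (lt_add_one c), D, ?_, ?_, hDmono, hDbig⟩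
  · intro a ha
    have haC := hDC ha
    have h1 : b < a := not_le.1 (fun hle => haC.2 (Or.inl hle))
    exact ⟨h1, lt_of_le_of_lt haC.1.1 (lt_add_one c)⟩
  · intro a ha
    have haC := hDC ha
    have h1 : b < g a := by
      by_contra hle
      exact haC.2 (Or.inr ⟨hCIio haC, le_of_not_gt hle⟩)
    exact ⟨h1, lt_of_le_of_lt haC.1.2 (lt_add_one c)⟩

private lemma key_lemma (lam : Cardi) (hlam : ℵ₀ ≤ lam) (g : Ordi → Ordi)
    (hran : ∀ a < lam.ord, g a < lam.ord) (hinj : Set.InjOn g (Set.Iio lam.ord)) :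
    ∃ S : Set Ordi, S ⊆ Set.Iio lam.ord ∧ #S = Cardinal.lift.{1} lam ∧
      StrictMonoOn g S := by
  have hIio : #(Set.Iio lam.ord : Set Ordi) = Cardinal.lift.{1} lam := by
    rw [Ordinal.mk_Iio_ordinal, Cardinal.card_ord]
  rcases eq_or_ne lam.ord.cof lam with hregeq | hsing
  · -- regular case
    have hregl : lam.IsRegular := ⟨hlam, le_of_eq hregeq.symm⟩
    obtain ⟨D, hDC, hDbig, hDmono⟩ :=
      chain_lemma lam hregl (Set.Iio lam.ord) g hinj (le_of_eq hIio.symm)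
    obtain ⟨S, hSD, hScard⟩ := Cardinal.le_mk_iff_exists_subset.1 hDbig
    exact ⟨S, hSD.trans hDC, hScard, hDmono.mono hSD⟩
  · -- singular case
    have hcof : lam.ord.cof < lam := lt_of_le_of_ne (Ordinal.cof_ord_le lam) hsing
    obtain ⟨fs, hfs⟩ := Ordinal.exists_fundamental_sequence lam.ord
    have hstep : ∀ b : Ordi, ∃ p : Ordi × Set Ordi, b < lam.ord →
        (p.1 < lam.ord ∧ b < p.1 ∧ p.2 ⊆ Set.Ioo b p.1 ∧
         (∀ a ∈ p.2, g a ∈ Set.Ioo b p.1) ∧ StrictMonoOn g p.2 ∧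
         Cardinal.lift.{1} (Order.succ (b.card ⊔ ℵ₀)) ≤ #(p.2)) := by
      intro b
      by_cases hb : b < lam.ord
      · obtain ⟨b', h1, h2, D, h3, h4, h5, h6⟩ :=
          step_lemma lam hlam hcof g hran hinj b hb
        exact ⟨(b', D), fun _ => ⟨h1, h2, h3, h4, h5, h6⟩⟩
      · exact ⟨(0, ∅), fun h => absurd h hb⟩
    choose stp hstp using hstep
    set fseq : Ordi → Ordi :=
      fun i => if h : i < lam.ord.cof.ord then fs i h else 0 with hfseqdef
    set β : Ordi → Ordi := Ordinal.lt_wf.fix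
      (fun i rec => (stp (Ordinal.bsup i (fun j hj => rec j hj) ⊔ fseq i)).1) with hβdef
    set bb : Ordi → Ordi :=
      fun i => Ordinal.bsup i (fun j _ => β j) ⊔ fseq i with hbbdef
    have hβ : ∀ i, β i = (stp (bb i)).1 := by
      intro i
      rw [hβdef, hbbdef]
      exact Ordinal.lt_wf.fix_eq _ i
    have inv : ∀ i, i < lam.ord.cof.ord → bb i < lam.ord ∧ β i < lam.ord := by
      intro i
      induction i using Ordinal.induction with
      | h i IH =>
        intro hi
        have hσ : Ordinal.bsup i (fun j _ => β j) < lam.ord := by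
          apply Ordinal.bsup_lt_ord
          · exact Cardinal.lt_ord.1 hi
          · exact fun j hj => (IH j hj (lt_trans hj hi)).2
        have hfseqlt : fseq i < lam.ord := by
          rw [hfseqdef]
          dsimp only
          rw [dif_pos hi]
          have h := Ordinal.lt_blsub fs i hi
          rwa [hfs.2.2] at h
        have hbbi : bb i < lam.ord := max_lt hσ hfseqlt
        refine ⟨hbbi, ?_⟩
        rw [hβ i]
        exact (hstp (bb i) hbbi).1
    have hdprops := fun i (hi : i < lam.ord.cof.ord) => hstp (bb i) (inv i hi).1
    set S : Set Ordi := ⋃ i ∈ Set.Iio lam.ord.cof.ord, (stp (bb i)).2 with hSdef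
    have hmem : ∀ a ∈ S, ∃ i, i < lam.ord.cof.ord ∧ a ∈ (stp (bb i)).2 := by
      intro a ha
      rw [hSdef] at ha
      obtain ⟨i, hi, hai⟩ := Set.mem_iUnion₂.1 ha
      exact ⟨i, hi, hai⟩
    have horder : ∀ i j, i < j → β i ≤ bb j := fun i j hij =>
      le_trans (Ordinal.le_bsup (fun k _ => β k) i hij) (le_max_left _ _)
    have hSsub : S ⊆ Set.Iio lam.ord := by
      intro a ha
      obtain ⟨i, hi, hai⟩ := hmem a ha
      have h3 := (hdprops i hi).2.2.1 hai
      have h4 : a < β i := by rw [hβ i]; exact h3.2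
      exact lt_trans h4 (inv i hi).2
    have hSmono : StrictMonoOn g S := by
      intro x hx y hy hxy
      obtain ⟨i, hi, hxi⟩ := hmem x hx
      obtain ⟨j, hj, hyj⟩ := hmem y hy
      rcases lt_trichotomy i j with hij | hij | hij
      · have hgx : g x < β i := by
          rw [hβ i]
          exact ((hdprops i hi).2.2.2.1 x hxi).2
        have hgy : bb j < g y := ((hdprops j hj).2.2.2.1 y hyj).1
        calc g x < β i := hgx
          _ ≤ bb j := horder i j hij
          _ < g y := hgy
      · subst hij
        exact (hdprops i hi).2.2.2.2.1 hxi hyj hxy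
      · exfalso
        have hxgt : bb i < x := ((hdprops i hi).2.2.1 hxi).1
        have hylt : y < β j := by
          rw [hβ j]
          exact ((hdprops j hj).2.2.1 hyj).2
        have : y < x := lt_of_lt_of_le hylt ((horder j i hij).trans hxgt.le)
        exact lt_asymm hxy this
    have hSle : #S ≤ Cardinal.lift.{1} lam := by
      rw [← hIio]
      exact Cardinal.mk_le_mk_of_subset hSsub
    have hSge : ∀ ρ : Cardi, ρ < lam → Cardinal.lift.{1} ρ < #S := by
      intro ρ hρ
      have hρord : ρ.ord < lam.ord := Cardinal.ord_lt_ord.2 hρ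
      obtain ⟨i, hi, hle⟩ := Ordinal.lt_blsub_iff.1 (by rw [hfs.2.2]; exact hρord)
      have hfseqi : fseq i = fs i hi := dif_pos hi
      have hbbge : ρ.ord ≤ bb i := by
        refine le_trans ?_ (le_max_right _ _)
        rw [hfseqi]
        exact hle
      have hcard : ρ ≤ (bb i).card := by
        have h := Ordinal.card_le_card hbbge
        rwa [Cardinal.card_ord] at h
      have h6 := (hdprops i hi).2.2.2.2.2
      have hsub : (stp (bb i)).2 ⊆ S := by
        intro a ha
        rw [hSdef]
        exact Set.mem_biUnion hi ha
      calc Cardinal.lift.{1} ρ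
          < Cardinal.lift.{1} (Order.succ ((bb i).card ⊔ ℵ₀)) := by
            apply Cardinal.lift_lt.2
            exact lt_of_le_of_lt (hcard.trans (le_max_left _ _)) (Order.lt_succ _)
        _ ≤ #(stp (bb i)).2 := h6
        _ ≤ #S := Cardinal.mk_le_mk_of_subset hsub
    have hScard : #S = Cardinal.lift.{1} lam := by
      rcases lt_or_eq_of_le hSle with h | h
      · obtain ⟨ρ, hρ, hρeq⟩ := Cardinal.lt_lift_iff.1 h
        exact absurd (hρeq ▸ hSge ρ hρ) (lt_irrefl _)
      · exact h
    exact ⟨S, hSsub, hScard, hSmono⟩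

end AuxMono

/-- Pr(λ, κ) implies Ps(λ, κ). -/
theorem stmt_2 (lam kap : Cardi) (h0 : ℵ₀ ≤ kap) (h1 : kap < lam)
    (h : Pr lam kap) : Ps lam kap := by
  obtain ⟨F, hF1, hF2, hF3, hF4⟩ := h
  refine ⟨F, hF1, hF2, hF3, ?_⟩
  intro g hg1 hg2
  have hlam : ℵ₀ ≤ lam := le_of_lt (lt_of_le_of_lt h0 h1)
  obtain ⟨S, hSsub, hScard, hSmono⟩ := key_lemma lam hlam g hg1 hg2
  set pg : Ordi →. Ordi := fun a => ⟨a ∈ S, fun _ => g a⟩ with hpgdef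
  have hpgmem : ∀ a b, b ∈ pg a ↔ ∃ _ : a ∈ S, g a = b := by
    intro a b
    exact Part.mem_mk_iff
  have hpgdom : pg.Dom = S := rfl
  have hdomran : PFDomRan lam pg := by
    constructor
    · rw [hpgdom]
      exact hSsub
    · intro a b hb
      obtain ⟨ha, rfl⟩ := (hpgmem a b).1 hb
      exact hg1 a (hSsub ha)
  have hinc : PFInc pg := by
    intro a b c d hc hd hab
    obtain ⟨ha, rfl⟩ := (hpgmem a c).1 hc
    obtain ⟨hb, rfl⟩ := (hpgmem b d).1 hd
    exact hSmono ha hb hab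
  have hcard : #(↥pg.Dom) = Cardinal.lift.{1} lam := by
    rw [hpgdom]
    exact hScard
  obtain ⟨f, hfF, hfle⟩ := hF4 pg hdomran hinc hcard
  refine ⟨f, hfF, ?_⟩
  intro a b hb
  obtain ⟨ha, rfl⟩ := (hpgmem a b).1 (hfle a b hb)
  rfl
end

section
/- For every infinite cardinal κ and every injective function f : κ → Ordinals, there exists a subset A of κ of cardinality κ such that f restricted to A is strictly increasing. -/
open Cardinal Set Ordinal

lemma aux_records {α : Type*} [LinearOrder α] (f : α → Ordinal.{0}) (S : Set α)
    (hf : Set.InjOn f S) :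
    StrictMonoOn f {x | x ∈ S ∧ ∀ y ∈ S, x < y → f x < f y} ∧
      ∀ x ∈ S, ∃ a, (a ∈ S ∧ ∀ y ∈ S, a < y → f a < f y) ∧ x ≤ a := by
  constructor
  · intro x hx y hy hxy
    exact hx.2 y hy.1 hxy
  · intro x hx
    have hne : (f '' {y | y ∈ S ∧ x ≤ y ∧ f y ≤ f x}).Nonempty :=
      ⟨f x, ⟨x, ⟨hx, le_rfl, le_rfl⟩, rfl⟩⟩
    obtain ⟨v, ⟨a, ⟨haS, hxa, hafx⟩, rfl⟩, hmin⟩ := Ordinal.lt_wf.has_min _ hne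
    refine ⟨a, ⟨haS, ?_⟩, hxa⟩
    intro y hy hay
    by_contra hcon
    push_neg at hcon
    have hne' : f y ≠ f a := fun h => (ne_of_gt hay) (hf hy haS h)
    have hlt : f y < f a := lt_of_le_of_ne hcon hne'
    exact hmin (f y) ⟨y, ⟨hy, hxa.trans hay.le, hlt.le.trans hafx⟩, rfl⟩ hlt

lemma aux_regular {κ : Cardinal.{0}} (hreg : κ.IsRegular) {α : Type} [LinearOrder α]
    (e : κ.ord.ToType ↪o α) (f : α → Ordinal.{0}) (hf : Set.InjOn f (Set.range e)) :
    ∃ A : Set α, A ⊆ Set.range e ∧ #A = κ ∧ StrictMonoOn f A := by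
  set g : κ.ord.ToType → Ordinal.{0} := f ∘ e with hg
  have hginj : Function.Injective g := by
    intro a b hab
    exact e.injective (hf ⟨a, rfl⟩ ⟨b, rfl⟩ hab)
  obtain ⟨hmono, hcof⟩ := aux_records g Set.univ (hginj.injOn)
  set A₀ : Set κ.ord.ToType := {x | x ∈ Set.univ ∧ ∀ y ∈ Set.univ, x < y → g x < g y} with hA₀
  have hunb : Set.Unbounded (· < ·) A₀ := by
    intro x
    obtain ⟨a, ha, hxa⟩ := hcof x (Set.mem_univ x)
    exact ⟨a, ha, not_lt.2 hxa⟩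
  haveI : IsWellOrder κ.ord.ToType ((· < ·) : κ.ord.ToType → κ.ord.ToType → Prop) :=
    isWellOrder_lt
  have h1 : κ ≤ #A₀ := by
    have := Order.cof_le (α := κ.ord.ToType) (s := A₀)
      (fun x => let ⟨a, ha, hxa⟩ := hcof x (Set.mem_univ x); ⟨a, ha, hxa⟩)
    rwa [cof_toType, hreg.cof_eq] at this
  have h2 : #A₀ ≤ κ := by
    have := Cardinal.mk_set_le A₀
    rwa [Cardinal.mk_toType, Cardinal.card_ord] at this
  refine ⟨e '' A₀, Set.image_subset_range e A₀, ?_, ?_⟩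
  · rw [Cardinal.mk_image_eq e.injective]
    exact le_antisymm h2 h1
  · rintro x ⟨u, hu, rfl⟩ y ⟨v, hv, rfl⟩ hxy
    have huv : u < v := e.lt_iff_lt.1 hxy
    exact hmono hu hv huv

/-- One stage of the construction in the singular case. -/
lemma aux_step (kap : Cardinal.{0}) (haleph : ℵ₀ < kap)
    (hsucc : ∀ μ : Cardinal.{0}, μ < kap → Order.succ μ < kap)
    (g : kap.ord.ToType → Ordinal.{0}) (hginj : Function.Injective g)
    (δ : Ordinal.{0}) (hκδ : kap.ord ≤ δ)
    (count : ∀ W : Ordinal.{0}, W ≤ δ → #{x | g x < W} = W.card)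
    (κi : Cardinal.{0}) (hκreg : κi.IsRegular) (hκlt : κi < kap)
    (J : Type) (bndx : J → kap.ord.ToType) (bndw : J → Ordinal.{0})
    (hJ : #J < kap.ord.cof) (hJk : #J < kap) (hbndw : ∀ j, (bndw j).card < kap) :
    ∃ (A : Set kap.ord.ToType) (xt : kap.ord.ToType) (w : Ordinal.{0}),
      (∀ a ∈ A, (∀ j, bndx j < a ∧ bndw j ≤ g a) ∧ a < xt ∧ g a < w)
      ∧ κi ≤ #A ∧ StrictMonoOn g A ∧ w.card < kap := by
  set bad : Set kap.ord.ToType :=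
    (⋃ j, Set.Iic (bndx j)) ∪ (⋃ j, {x | g x < bndw j}) with hbaddef
  have hIic : ∀ x : kap.ord.ToType, #(Set.Iic x) < kap := by
    intro x
    have hsub : (Set.Iic x : Set kap.ord.ToType) ⊆ Set.Iio x ∪ {x} := by
      intro y hy
      rcases lt_or_eq_of_le (mem_Iic.1 hy) with h | h
      · exact Or.inl h
      · exact Or.inr (by simp [h])
    calc #(Set.Iic x) ≤ #((Set.Iio x ∪ {x} : Set _)) := mk_le_mk_of_subset hsub
      _ ≤ #(Set.Iio x) + #({x} : Set _) := mk_union_le _ _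
      _ < kap := Cardinal.add_lt_of_lt haleph.le (Cardinal.mk_Iio_ord_toType x)
          (by rw [Cardinal.mk_singleton]; exact one_lt_aleph0.trans haleph)
  have hbndwδ : ∀ j, bndw j ≤ δ := fun j => ((Cardinal.lt_ord.2 (hbndw j)).le.trans hκδ)
  have hbad : #bad < kap := by
    have h1 : #(⋃ j, Set.Iic (bndx j)) < kap := by
      refine lt_of_le_of_lt (mk_iUnion_le _) ?_
      exact Cardinal.mul_lt_of_lt haleph.le hJk (Ordinal.iSup_lt hJ fun j => hIic (bndx j))
    have h2 : #(⋃ j, {x | g x < bndw j}) < kap := by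
      refine lt_of_le_of_lt (mk_iUnion_le _) ?_
      refine Cardinal.mul_lt_of_lt haleph.le hJk (Ordinal.iSup_lt hJ fun j => ?_)
      rw [count (bndw j) (hbndwδ j)]
      exact hbndw j
    exact lt_of_le_of_lt (mk_union_le _ _) (Cardinal.add_lt_of_lt haleph.le h1 h2)
  set μ : Cardinal.{0} := κi ⊔ #bad ⊔ ℵ₀ with hμdef
  have hμ : μ < kap := max_lt (max_lt hκlt hbad) haleph
  have hμinf : ℵ₀ ≤ μ := le_sup_right
  set W : Ordinal.{0} := (Order.succ μ).ord with hWdef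
  have hWδ : W ≤ δ := le_trans (Cardinal.ord_le_ord.2 (hsucc μ hμ).le) hκδ
  have hWcount : #{x | g x < W} = Order.succ μ := (count W hWδ).trans (card_ord _)
  set X : Set kap.ord.ToType := {x | g x < W} \ bad with hXdef
  have hXgt : μ < #X := by
    by_contra h
    push_neg at h
    have hsub : {x | g x < W} ⊆ X ∪ bad := by
      intro x hx
      by_cases hb : x ∈ bad
      · exact Or.inr hb
      · exact Or.inl ⟨hx, hb⟩
    have h1 : Order.succ μ ≤ #X + #bad :=
      hWcount ▸ (mk_le_mk_of_subset hsub).trans (mk_union_le _ _)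
    have h2 : #X + #bad ≤ μ := by
      calc #X + #bad ≤ μ + μ := add_le_add h (le_sup_right.trans le_sup_left)
        _ = μ := Cardinal.add_eq_self hμinf
    exact (Order.lt_succ μ).not_ge (h1.trans h2)
  haveI : IsWellOrder ↥X ((· < ·) : ↥X → ↥X → Prop) := isWellOrder_lt
  have hτ : κi.ord < type ((· < ·) : ↥X → ↥X → Prop) := by
    by_contra hle
    push_neg at hle
    have hc : #X ≤ κi := by
      have := Ordinal.card_le_card hle
      rwa [card_type, card_ord] at this
    exact (((le_sup_left.trans le_sup_left : κi ≤ μ).trans_lt hXgt).not_ge) hc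
  haveI : IsWellOrder κi.ord.ToType ((· < ·) : κi.ord.ToType → κi.ord.ToType → Prop) :=
    isWellOrder_lt
  rw [← type_toType κi.ord] at hτ
  obtain ⟨pseg⟩ := Ordinal.type_lt_iff.1 hτ
  set e : κi.ord.ToType ↪o kap.ord.ToType := OrderEmbedding.ofStrictMono
    (fun b => ((pseg b : ↥X) : kap.ord.ToType))
    (fun a b h => pseg.toRelEmbedding.map_rel_iff.2 h) with hedef
  obtain ⟨A, hAsub, hAcard, hAmono⟩ := aux_regular hκreg e g hginj.injOn
  have hAX : ∀ a ∈ A, a ∈ X := by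
    intro a ha
    obtain ⟨b, rfl⟩ := hAsub ha
    exact (pseg b).2
  refine ⟨A, ((pseg.top : ↥X) : kap.ord.ToType), W, ?_, hAcard.ge, hAmono,
    by rw [hWdef, card_ord]; exact hsucc μ hμ⟩
  intro a ha
  have haX := hAX a ha
  have hnb : a ∉ bad := haX.2
  refine ⟨fun j => ⟨?_, ?_⟩, ?_, haX.1⟩
  · by_contra h
    push_neg at h
    exact hnb (Or.inl (mem_iUnion.2 ⟨j, h⟩))
  · by_contra h
    push_neg at h
    exact hnb (Or.inr (mem_iUnion.2 ⟨j, h⟩))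
  · obtain ⟨b, rfl⟩ := hAsub ha
    exact pseg.lt_top b


/-- For every infinite cardinal `κ` and injective `f : κ → Ordinal` there is a subset `A`
of `κ` of cardinality `κ` on which `f` is strictly increasing. -/
theorem stmt_4 (kap : Cardinal.{0}) (hkap : ℵ₀ ≤ kap)
    (f : kap.ord.ToType → Ordinal.{0}) (hf : Function.Injective f) :
    ∃ A : Set kap.ord.ToType, #A = kap ∧ StrictMonoOn f A := by
  classical
  haveI hwo : IsWellOrder kap.ord.ToType ((· < ·) : kap.ord.ToType → kap.ord.ToType → Prop) :=
    isWellOrder_lt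
  by_cases hreg : kap ≤ kap.ord.cof
  · -- regular case
    obtain ⟨A, -, hA, hm⟩ := aux_regular ⟨hkap, hreg⟩
      (OrderIso.refl kap.ord.ToType).toOrderEmbedding f (hf.injOn)
    exact ⟨A, hA, hm⟩
  · -- singular case
    push_neg at hreg
    have haleph : ℵ₀ < kap := by
      rcases lt_or_eq_of_le hkap with h | h
      · exact h
      · exfalso
        rw [← h] at hreg
        exact hreg.not_ge isRegular_aleph0.2
    have hsucc : ∀ μ : Cardinal.{0}, μ < kap → Order.succ μ < kap := by
      intro μ hμ
      rcases lt_or_ge μ ℵ₀ with h | h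
      · exact lt_of_le_of_lt (Order.succ_le_of_lt h) haleph
      · rcases lt_or_eq_of_le (Order.succ_le_of_lt hμ) with h' | h'
        · exact h'
        · exact absurd (h' ▸ (isRegular_succ h).2) hreg.not_ge
    -- normalize f to g = rank function
    set p : kap.ord.ToType → kap.ord.ToType → Prop := fun a b => f a < f b with hp
    haveI : IsTrans kap.ord.ToType p := ⟨fun _ _ _ h1 h2 => lt_trans h1 h2⟩
    haveI : IsTrichotomous kap.ord.ToType p := ⟨fun a b h1 h2 => by
      rcases lt_trichotomy (f a) (f b) with h | h | h
      · exact absurd h h1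
      · exact hf h
      · exact absurd h h2⟩
    haveI : IsWellFounded kap.ord.ToType p := ⟨InvImage.wf f Ordinal.lt_wf⟩
    haveI hpwo : IsWellOrder kap.ord.ToType p := ⟨⟩
    set g : kap.ord.ToType → Ordinal.{0} := fun x => typein p x with hgdef
    have hgf : ∀ x y, g x < g y ↔ f x < f y := fun x y => typein_lt_typein p
    have hginj : Function.Injective g := typein_injective p
    set δ : Ordinal.{0} := type p with hδdef
    have hδcard : δ.card = kap := by rw [hδdef, card_type, Cardinal.mk_toType, card_ord]
    have hκδ : kap.ord ≤ δ := by rw [Cardinal.ord_le, hδcard]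
    have hglt : ∀ x, g x < δ := typein_lt_type p
    have count : ∀ W : Ordinal.{0}, W ≤ δ → #{x | g x < W} = W.card := by
      intro W hW
      rcases lt_or_eq_of_le hW with h | h
      · obtain ⟨a, ha⟩ := typein_surj p h
        have hset : {x | g x < W} = {x | p x a} := by
          ext x
          rw [mem_setOf_eq, mem_setOf_eq, ← ha, hgdef, typein_lt_typein]
        rw [hset, ← ha]
        exact (Ordinal.card_typein (r := p) a).symm
      · have hset : {x | g x < W} = Set.univ := by
          ext x; simpa [h] using hglt x
        rw [hset, h, hδdef, card_type]
        exact Cardinal.mk_univ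
    -- the cofinal index set
    obtain ⟨S, hSunb, hStype⟩ :=
      Ordinal.exists_ord_cof_eq kap.ord.ToType
    rw [cof_toType] at hStype
    haveI : IsWellOrder ↥S ((· < ·) : ↥S → ↥S → Prop) := isWellOrder_lt
    have htypeI : type ((· < ·) : ↥S → ↥S → Prop) = kap.ord.cof.ord := hStype
    set κfun : ↥S → Cardinal.{0} := fun i =>
      Order.succ ((typein ((· < ·) : kap.ord.ToType → kap.ord.ToType → Prop) i.val).card ⊔ ℵ₀)
      with hκfun
    have hκreg : ∀ i, (κfun i).IsRegular := fun i => isRegular_succ le_sup_right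
    have hκlt : ∀ i, κfun i < kap := fun i => hsucc _
      (max_lt (Cardinal.card_typein_toType_lt kap i.val) haleph)
    haveI hne : Nonempty kap.ord.ToType := by
      rw [Ordinal.toType_nonempty_iff_ne_zero]
      intro h0
      have hω : ω ≤ kap.ord := by
        rw [← Cardinal.ord_aleph0]
        exact Cardinal.ord_le_ord.2 hkap
      rw [h0] at hω
      exact (LT.lt.not_ge Ordinal.omega0_pos) hω
    set Cond : ∀ i : ↥S, (∀ j : ↥S, j < i → Set kap.ord.ToType × kap.ord.ToType × Ordinal.{0}) →
        Set kap.ord.ToType × kap.ord.ToType × Ordinal.{0} → Prop := fun i prev t =>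
      (∀ a ∈ t.1, (∀ (j : ↥S) (hj : j < i), (prev j hj).2.1 < a ∧ (prev j hj).2.2 ≤ g a)
        ∧ a < t.2.1 ∧ g a < t.2.2)
      ∧ κfun i ≤ #t.1 ∧ StrictMonoOn g t.1 ∧ t.2.2.card < kap with hCond
    have hex : ∀ (i : ↥S) (prev : ∀ j : ↥S, j < i →
        Set kap.ord.ToType × kap.ord.ToType × Ordinal.{0}),
        (∀ j hj, (prev j hj).2.2.card < kap) → ∃ t, Cond i prev t := by
      intro i prev hprev
      have hJcof : #{j : ↥S // j < i} < kap.ord.cof := by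
        have h1 : #{j : ↥S // j < i} = (typein ((· < ·) : ↥S → ↥S → Prop) i).card :=
          (Ordinal.card_typein (r := ((· < ·) : ↥S → ↥S → Prop)) i).symm
        rw [h1, ← Cardinal.lt_ord, ← htypeI]
        exact typein_lt_type _ i
      have hJk : #{j : ↥S // j < i} < kap := hJcof.trans_le (Ordinal.cof_ord_le kap)
      obtain ⟨A, xt, w, h⟩ := aux_step kap haleph hsucc g hginj δ hκδ count (κfun i)
        (hκreg i) (hκlt i) {j : ↥S // j < i} (fun j => (prev j.1 j.2).2.1)
        (fun j => (prev j.1 j.2).2.2) hJcof hJk (fun j => hprev j.1 j.2)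
      refine ⟨(A, xt, w), ?_⟩
      rw [hCond]
      exact ⟨fun a ha => ⟨fun j hj => (h.1 a ha).1 ⟨j, hj⟩, (h.1 a ha).2⟩, h.2.1, h.2.2.1, h.2.2.2⟩
    have wfI : WellFounded ((· < ·) : ↥S → ↥S → Prop) := wellFounded_lt
    set junk : Set kap.ord.ToType × kap.ord.ToType × Ordinal.{0} :=
      (∅, Classical.arbitrary _, 0) with hjunk
    set F : ↥S → Set kap.ord.ToType × kap.ord.ToType × Ordinal.{0} := WellFounded.fix wfI
      (fun i rec => if h : ∃ t, Cond i rec t then h.choose else junk) with hFdef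
    have hFeq : ∀ i, F i = if h : ∃ t, Cond i (fun j _ => F j) t then h.choose else junk := by
      intro i
      rw [hFdef]
      exact WellFounded.fix_eq wfI _ i
    have hF : ∀ i, Cond i (fun j _ => F j) (F i) := by
      intro i
      refine WellFounded.induction wfI (C := fun i => Cond i (fun j _ => F j) (F i)) i ?_
      intro i ih
      have hexi : ∃ t, Cond i (fun j _ => F j) t := by
        refine hex i _ (fun j hj => ?_)
        have := ih j hj
        rw [hCond] at this
        exact this.2.2.2
      rw [hFeq i, dif_pos hexi]
      exact hexi.choose_spec
    simp only [hCond] at hF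
    refine ⟨⋃ i, (F i).1, ?_, ?_⟩
    · -- cardinality
      have hle : #(⋃ i, (F i).1) ≤ kap := by
        have := Cardinal.mk_set_le (⋃ i, (F i).1)
        rwa [Cardinal.mk_toType, card_ord] at this
      refine le_antisymm hle ?_
      refine le_of_forall_lt fun μ hμ => ?_
      have h1 : μ.ord < type ((· < ·) : kap.ord.ToType → kap.ord.ToType → Prop) := by
        rw [type_toType]
        exact Cardinal.ord_lt_ord.2 hμ
      obtain ⟨x₀, hx₀⟩ := typein_surj _ h1
      obtain ⟨iv, hiS, hnot⟩ := hSunb x₀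
      have h2 : μ ≤ (typein ((· < ·) : kap.ord.ToType → kap.ord.ToType → Prop) iv).card := by
        have ht : typein ((· < ·) : kap.ord.ToType → kap.ord.ToType → Prop) x₀ ≤
            typein ((· < ·) : kap.ord.ToType → kap.ord.ToType → Prop) iv :=
          (typein_le_typein _).2 (not_lt.2 hnot)
        rw [hx₀] at ht
        have := Ordinal.card_le_card ht
        rwa [card_ord] at this
      have h3 : μ < κfun ⟨iv, hiS⟩ := lt_of_le_of_lt (h2.trans le_sup_left) (Order.lt_succ _)
      calc μ < κfun ⟨iv, hiS⟩ := h3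
        _ ≤ #((F ⟨iv, hiS⟩).1) := (hF ⟨iv, hiS⟩).2.1
        _ ≤ #(⋃ i, (F i).1) := mk_le_mk_of_subset (subset_iUnion (fun i => (F i).1) ⟨iv, hiS⟩)
    · -- strict monotonicity
      intro x hx y hy hxy
      obtain ⟨Bi, ⟨i, rfl⟩, hxi⟩ := hx
      obtain ⟨Bj, ⟨j, rfl⟩, hyj⟩ := hy
      have key : g x < g y := by
        rcases lt_trichotomy i j with h | h | h
        · exact lt_of_lt_of_le ((hF i).1 x hxi).2.2 (((hF j).1 y hyj).1 i h).2
        · subst h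
          exact (hF i).2.2.1 hxi hyj hxy
        · exfalso
          have hb1 : y < (F j).2.1 := ((hF j).1 y hyj).2.1
          have hb2 : (F j).2.1 < x := (((hF i).1 x hxi).1 j h).1
          exact absurd (hxy.trans (hb1.trans hb2)) (lt_irrefl x)
      exact (hgf x y).1 key
end

section
/- If Ps'(λ, κ) holds for infinite cardinals κ < λ, then Ps(λ, κ) holds. -/
open Cardinal Set

noncomputable def oty (s : Set Ordi) : Ordinal.{1} := Ordinal.type (α := s) (· < ·)

lemma oty_Iio (o : Ordi) : oty (Set.Iio o) = Ordinal.lift.{1} o := Ordinal.typein_ordinal o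

lemma oty_mono {s t : Set Ordi} (h : s ⊆ t) : oty s ≤ oty t := by
  rw [oty, oty, Ordinal.type_le_iff']
  exact ⟨⟨⟨fun x => ⟨x.1, h x.2⟩, fun a b hab => by simpa [Subtype.ext_iff] using hab⟩,
    Iff.rfl⟩⟩

lemma card_oty (s : Set Ordi) : (oty s).card = #s := Ordinal.card_type _

lemma otpEq_iff {s : Set Ordi} {o : Ordi} : OtpEq s o ↔ oty s = Ordinal.lift.{1} o := by
  rw [← oty_Iio o, oty, oty, Ordinal.type_eq]
  constructor
  · rintro ⟨e⟩
    exact ⟨⟨e.toEquiv, by intro a b; simpa using e.lt_iff_lt.symm⟩⟩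
  · rintro ⟨e⟩
    exact ⟨OrderIso.ofRelIsoLT e⟩

lemma oty_eq_of_card {s t : Set Ordi} {κ : Cardi} (hst : s ⊆ t)
    (ht : oty t = Ordinal.lift.{1} κ.ord) (hs : #s = Cardinal.lift.{1} κ) :
    oty s = Ordinal.lift.{1} κ.ord := by
  have h1 : oty s ≤ Ordinal.lift.{1} κ.ord := ht ▸ oty_mono hst
  have h2 : (Cardinal.lift.{1} κ).ord ≤ oty s := by
    rw [Cardinal.ord_le, card_oty, hs]
  have h3 : Ordinal.lift.{1} κ.ord ≤ oty s := by
    rw [Cardinal.lift_ord]; exact h2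
  exact le_antisymm h1 h3

lemma small_of_bounded {t : Set Ordi} {κ : Cardi} {c : Ordi}
    (ht : oty t = Ordinal.lift.{1} κ.ord) (hc : c ∈ t) {s : Set Ordi}
    (hs : s ⊆ t) (hb : ∀ x ∈ s, x < c) : #s < Cardinal.lift.{1} κ := by
  have he : Nonempty ((t : Set Ordi) ≃o Set.Iio κ.ord) := by
    rw [← oty_Iio κ.ord, oty, oty, Ordinal.type_eq] at ht
    obtain ⟨e⟩ := ht
    exact ⟨OrderIso.ofRelIsoLT e⟩
  obtain ⟨e⟩ := he
  set β : Ordi := (e ⟨c, hc⟩).1 with hβ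
  have hβκ : β < κ.ord := (e ⟨c, hc⟩).2
  have hφ : ∀ x : s, ((e ⟨x.1, hs x.2⟩).1 : Ordi) < β := by
    intro x
    have : (⟨x.1, hs x.2⟩ : t) < ⟨c, hc⟩ := by
      simp only [Subtype.mk_lt_mk]; exact hb x.1 x.2
    simpa [hβ, Subtype.coe_lt_coe] using (e.lt_iff_lt.2 this)
  have hinj : Function.Injective (fun x : s => ((e ⟨x.1, hs x.2⟩).1 : Ordi)) := by
    intro a b hab
    have : (⟨a.1, hs a.2⟩ : t) = ⟨b.1, hs b.2⟩ := e.injective (Subtype.ext hab)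
    exact Subtype.ext (by simpa [Subtype.ext_iff] using this)
  calc #s = #(Set.range fun x : s => ((e ⟨x.1, hs x.2⟩).1 : Ordi)) :=
        (Cardinal.mk_range_eq _ hinj).symm
    _ ≤ #(Set.Iio β) := Cardinal.mk_le_mk_of_subset (by rintro _ ⟨x, rfl⟩; exact hφ x)
    _ = Cardinal.lift.{1} β.card := Ordinal.mk_Iio_ordinal β
    _ < Cardinal.lift.{1} κ := by
        rw [Cardinal.lift_lt]; exact (Cardinal.lt_ord).1 hβκ

lemma initSeg (X : Set Ordi) (c : Cardi) (h : Cardinal.lift.{1} c < #X) :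
    ∃ u b, u ⊆ X ∧ oty u = Ordinal.lift.{1} c.ord ∧ #u = Cardinal.lift.{1} c ∧
      b ∈ X ∧ ∀ x ∈ u, x < b := by
  classical
  set r : X → X → Prop := (· < ·) with hr
  haveI : IsWellOrder X r := by rw [hr]; infer_instance
  set η : Ordinal.{1} := (Cardinal.lift.{1} c).ord with hηdef
  have hη : η < oty X := by
    have h1 : (Cardinal.lift.{1} c).ord < ((oty X).card).ord := Cardinal.ord_lt_ord.2 (by
      rwa [card_oty])
    exact h1.trans_le (Cardinal.ord_card_le _)
  set u : Set Ordi := {x : Ordi | ∃ hx : x ∈ X, Ordinal.typein r ⟨x, hx⟩ < η} with hu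
  have huX : u ⊆ X := fun x hx => hx.choose
  have hηtype : η < Ordinal.type r := hη
  have key : ∀ x : u, Ordinal.typein r ⟨x.1, huX x.2⟩ < η := by
    intro x
    obtain ⟨hx, hlt⟩ := x.2
    exact hlt
  set f : u → η.ToType := fun x =>
    Ordinal.ToType.mk (o := η) ⟨Ordinal.typein r ⟨x.1, huX x.2⟩, key x⟩ with hf
  have hbij : Function.Bijective f := by
    constructor
    · intro a b hab
      have h2 := (Ordinal.ToType.mk (o := η)).injective hab
      have h3 : Ordinal.typein r ⟨a.1, huX a.2⟩ = Ordinal.typein r ⟨b.1, huX b.2⟩ := by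
        simpa [Subtype.ext_iff] using h2
      have h4 := (Ordinal.typein r).injective h3
      exact Subtype.ext (by simpa [Subtype.ext_iff] using h4)
    · intro y
      set p : Set.Iio η := (Ordinal.ToType.mk (o := η)).symm y with hp
      obtain ⟨a, ha⟩ := Ordinal.typein_surj r (show (p : Ordinal.{1}) < Ordinal.type r from
        p.2.trans hηtype)
      have hau : a.1 ∈ u := ⟨a.2, by rw [Subtype.coe_eta, ha]; exact p.2⟩
      refine ⟨⟨a.1, hau⟩, ?_⟩
      have h5 : f ⟨a.1, hau⟩ = Ordinal.ToType.mk (o := η) p := by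
        show Ordinal.ToType.mk (o := η) _ = _
        congr 1
        exact Subtype.ext (by show Ordinal.typein r _ = _; rw [Subtype.coe_eta, ha])
      rw [h5, hp, OrderIso.apply_symm_apply]
  have hmap : ∀ a b : u, f a < f b ↔ a < b := by
    intro a b
    show Ordinal.ToType.mk (o := η) _ < Ordinal.ToType.mk (o := η) _ ↔ _
    rw [OrderIso.lt_iff_lt]; refine Subtype.mk_lt_mk.trans ?_; rw [Ordinal.typein_lt_typein r]
    exact Iff.rfl
  have hotyu : oty u = η := by
    have h7 : Nonempty (((· < ·) : u → u → Prop) ≃r ((· < ·) : η.ToType → η.ToType → Prop)) := by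
      refine ⟨⟨Equiv.ofBijective f hbij, ?_⟩⟩
      intro a b
      show f a < f b ↔ a < b
      exact hmap a b
    haveI : IsWellOrder η.ToType (· < ·) := isWellOrder_lt
    have h6 : Ordinal.type ((· < ·) : u → u → Prop) =
        Ordinal.type ((· < ·) : η.ToType → η.ToType → Prop) := Ordinal.type_eq.2 h7
    rw [oty]
    rw [Ordinal.type_toType η] at h6
    exact h6
  have hXu : ∃ b, b ∈ X \ u := by
    by_contra hc2
    push_neg at hc2
    have : X ⊆ u := by
      intro x hx
      by_contra hxu
      exact (hc2 x) ⟨hx, hxu⟩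
    have : X = u := Set.Subset.antisymm this huX
    rw [← this] at hotyu
    have := card_oty X
    rw [hotyu, hηdef, Cardinal.card_ord] at this
    exact absurd this (ne_of_lt h)
  obtain ⟨b, hbX, hbu⟩ := hXu
  refine ⟨u, b, huX, by rw [hotyu, hηdef, Cardinal.lift_ord],
    by rw [← card_oty, hotyu, hηdef, Cardinal.card_ord], hbX, ?_⟩
  intro x hx
  have hxb : Ordinal.typein r ⟨x, huX hx⟩ < Ordinal.typein r ⟨b, hbX⟩ := by
    have h8 : ¬ Ordinal.typein r ⟨b, hbX⟩ < η := fun hcon => hbu ⟨hbX, hcon⟩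
    exact lt_of_lt_of_le (key ⟨x, hx⟩) (not_lt.1 h8)
  have := (Ordinal.typein_lt_typein r).1 hxb
  exact this

noncomputable def gr (G : Ordi → Ordi) (κo : Ordi) : Ordi → Ordi :=
  Ordinal.lt_wf.fix fun i rec =>
    Classical.epsilon fun y =>
      (y < κo ∧ Ordinal.bsup i (fun j hj => Order.succ (rec j hj)) ≤ y) ∧
      ∀ z, (z < κo ∧ Ordinal.bsup i (fun j hj => Order.succ (rec j hj)) ≤ z) → G y ≤ G z

lemma gr_eq (G : Ordi → Ordi) (κo : Ordi) (i : Ordi) :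
    gr G κo i = Classical.epsilon (fun y =>
      (y < κo ∧ Ordinal.bsup i (fun j _ => Order.succ (gr G κo j)) ≤ y) ∧
      ∀ z, (z < κo ∧ Ordinal.bsup i (fun j _ => Order.succ (gr G κo j)) ≤ z) → G y ≤ G z) := by
  rw [gr, Ordinal.lt_wf.fix_eq]

lemma gr_spec (κ : Cardi) (hκ : ℵ₀ ≤ κ) (hreg : (κ.ord).cof = κ) (G : Ordi → Ordi) :
    ∀ i < κ.ord, (gr G κ.ord i < κ.ord ∧
      Ordinal.bsup i (fun j _ => Order.succ (gr G κ.ord j)) ≤ gr G κ.ord i ∧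
      ∀ z, (z < κ.ord ∧ Ordinal.bsup i (fun j _ => Order.succ (gr G κ.ord j)) ≤ z) →
        G (gr G κ.ord i) ≤ G z) := by
  intro i
  induction i using Ordinal.induction with
  | h i IH =>
    intro hi
    set b := Ordinal.bsup i (fun j _ => Order.succ (gr G κ.ord j)) with hbdef
    have hb : b < κ.ord := by
      apply Ordinal.bsup_lt_ord
      · rw [hreg]; exact Cardinal.lt_ord.1 hi
      · intro j hj
        exact (Cardinal.isSuccLimit_ord hκ).succ_lt (IH j hj (hj.trans hi)).1
    have hex : ∃ y, (y < κ.ord ∧ b ≤ y) ∧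
        ∀ z, (z < κ.ord ∧ b ≤ z) → G y ≤ G z := by
      have hT : G b ∈ G '' {z | z < κ.ord ∧ b ≤ z} :=
        Set.mem_image_of_mem _ ⟨hb, le_rfl⟩
      have hm := csInf_mem (Set.nonempty_of_mem hT)
      obtain ⟨y, hyT, hGy⟩ := hm
      refine ⟨y, hyT, fun z hz => ?_⟩
      rw [hGy]
      exact csInf_le (OrderBot.bddBelow _) (Set.mem_image_of_mem _ hz)
    have hspec := Classical.epsilon_spec hex
    have heq : gr G κ.ord i = Classical.epsilon (fun y => (y < κ.ord ∧ b ≤ y) ∧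
        ∀ z, (z < κ.ord ∧ b ≤ z) → G y ≤ G z) := by
      rw [gr_eq]
    rw [heq]
    exact ⟨hspec.1.1, hspec.1.2, hspec.2⟩

lemma keyRegular (κ : Cardi) (hκ : ℵ₀ ≤ κ) (hreg : (κ.ord).cof = κ) (G : Ordi → Ordi)
    (hG : Set.InjOn G (Set.Iio κ.ord)) :
    ∃ v, v ⊆ Set.Iio κ.ord ∧ #v = Cardinal.lift.{1} κ ∧
      ∀ x ∈ v, ∀ y ∈ v, x < y → G x < G y := by
  have spec := gr_spec κ hκ hreg G
  have hmono : ∀ i, ∀ j < κ.ord, i < j → gr G κ.ord i < gr G κ.ord j := by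
    intro i j hj hij
    have h1 : Order.succ (gr G κ.ord i) ≤
        Ordinal.bsup j (fun l _ => Order.succ (gr G κ.ord l)) :=
      Ordinal.le_bsup _ i hij
    have h2 := (spec j hj).2.1
    exact (Order.succ_le_iff.1 (h1.trans h2))
  refine ⟨(fun i => gr G κ.ord i) '' (Set.Iio κ.ord), ?_, ?_, ?_⟩
  · rintro _ ⟨i, hi, rfl⟩
    exact (spec i hi).1
  · rw [Cardinal.mk_image_eq_of_injOn _ _ ?_, Ordinal.mk_Iio_ordinal, Cardinal.card_ord]
    intro a ha b hb hab
    rcases lt_trichotomy a b with h | h | h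
    · exact absurd hab (ne_of_lt (hmono a b hb h))
    · exact h
    · exact absurd hab.symm (ne_of_lt (hmono b a ha h))
  · rintro _ ⟨i, hi, rfl⟩ _ ⟨j, hj, rfl⟩ hxy
    have hij : i < j := by
      rcases lt_trichotomy i j with h | h | h
      · exact h
      · subst h; exact absurd hxy (lt_irrefl _)
      · exact absurd (hmono j i hi h) (not_lt.2 hxy.le)
    have hle : G (gr G κ.ord i) ≤ G (gr G κ.ord j) := by
      refine (spec i hi).2.2 _ ⟨(spec j hj).1, ?_⟩
      refine le_trans (Ordinal.bsup_le fun l hl => Ordinal.le_bsup _ l (hl.trans hij))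
        (spec j hj).2.1
    exact lt_of_le_of_ne hle fun hEq => (ne_of_lt hxy)
      (hG (spec i hi).1 (spec j hj).1 hEq)

def KeyP (κ : Cardi) : Prop :=
  ℵ₀ ≤ κ → ∀ s : Set Ordi, oty s = Ordinal.lift.{1} κ.ord →
    ∀ g : Ordi → Ordi, Set.InjOn g s →
      ∃ u, u ⊆ s ∧ #u = Cardinal.lift.{1} κ ∧ ∀ x ∈ u, ∀ y ∈ u, x < y → g x < g y

noncomputable def sg (G : Ordi → Ordi) (κo γo : Ordi) (k : Ordi → Cardi) :
    Ordi → Set Ordi × Ordi × Ordi :=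
  Ordinal.lt_wf.fix fun i rec =>
    Classical.epsilon fun P : Set Ordi × Ordi × Ordi =>
      (∀ x ∈ P.1, (x < κo ∧ G x < γo) ∧
        Ordinal.bsup i (fun j hj => (rec j hj).2.1) ≤ x ∧
        Ordinal.bsup i (fun j hj => (rec j hj).2.2) ≤ G x) ∧
      (∀ x ∈ P.1, x < P.2.1) ∧ P.2.1 < κo ∧
      (∀ x ∈ P.1, G x < P.2.2) ∧ P.2.2 < γo ∧
      #P.1 = Cardinal.lift.{1} (k i) ∧
      (∀ x ∈ P.1, ∀ y ∈ P.1, x < y → G x < G y)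

lemma sg_eq (G : Ordi → Ordi) (κo γo : Ordi) (k : Ordi → Cardi) (i : Ordi) :
    sg G κo γo k i = Classical.epsilon (fun P : Set Ordi × Ordi × Ordi =>
      (∀ x ∈ P.1, (x < κo ∧ G x < γo) ∧
        Ordinal.bsup i (fun j _ => (sg G κo γo k j).2.1) ≤ x ∧
        Ordinal.bsup i (fun j _ => (sg G κo γo k j).2.2) ≤ G x) ∧
      (∀ x ∈ P.1, x < P.2.1) ∧ P.2.1 < κo ∧
      (∀ x ∈ P.1, G x < P.2.2) ∧ P.2.2 < γo ∧
      #P.1 = Cardinal.lift.{1} (k i) ∧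
      (∀ x ∈ P.1, ∀ y ∈ P.1, x < y → G x < G y)) := by
  rw [sg, Ordinal.lt_wf.fix_eq]

lemma keySingular (κ : Cardi) (hκ : ℵ₀ ≤ κ) (hsing : (κ.ord).cof < κ)
    (IH : ∀ κ' : Cardi, κ' < κ → KeyP κ')
    (G : Ordi → Ordi) (hG : Set.InjOn G (Set.Iio κ.ord)) :
    ∃ v, v ⊆ Set.Iio κ.ord ∧ #v = Cardinal.lift.{1} κ ∧
      ∀ x ∈ v, ∀ y ∈ v, x < y → G x < G y := by
  classical
  have hκlim : Order.IsSuccLimit (κ.ord) := Cardinal.isSuccLimit_ord hκ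
  have hμ0 : ℵ₀ ≤ (κ.ord).cof := Ordinal.aleph0_le_cof.2 hκlim
  have hℵκ : ℵ₀ < κ := lt_of_le_of_lt hμ0 hsing
  have hκliftinf : ℵ₀ ≤ Cardinal.lift.{1} κ := by
    rw [← Cardinal.lift_aleph0.{1,0}]; exact Cardinal.lift_le.2 hκ
  have hlimκ : ∀ b < κ, Order.succ b < κ := by
    intro b hb
    rcases lt_or_ge b ℵ₀ with h | h
    · exact lt_of_le_of_lt (Order.succ_le_of_lt h) hℵκ
    · have hsucc := Cardinal.isRegular_succ h
      rcases lt_or_eq_of_le (Order.succ_le_of_lt hb) with h2 | h2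
      · exact h2
      · exact absurd (h2 ▸ hsucc.2) (not_le.2 hsing)
  set W : Ordi → Set Ordi := fun δ => {x | x < κ.ord ∧ G x < δ} with hW
  have hWsub : ∀ δ, W δ ⊆ Set.Iio κ.ord := fun δ x hx => hx.1
  have hWle : ∀ δ, #(W δ) ≤ Cardinal.lift.{1} κ := by
    intro δ
    calc #(W δ) ≤ #(Set.Iio κ.ord) := Cardinal.mk_le_mk_of_subset (hWsub δ)
      _ = Cardinal.lift.{1} κ := by rw [Ordinal.mk_Iio_ordinal, Cardinal.card_ord]
  have hΓ : ∃ δ, #(W δ) = Cardinal.lift.{1} κ := by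
    refine ⟨Ordinal.bsup κ.ord (fun x _ => G x + 1), ?_⟩
    have : W (Ordinal.bsup κ.ord (fun x _ => G x + 1)) = Set.Iio κ.ord := by
      apply Set.Subset.antisymm (hWsub _)
      intro x hx
      exact ⟨hx, (Order.lt_succ _).trans_le (Ordinal.le_bsup (fun x _ => G x + 1) x hx)⟩
    rw [this, Ordinal.mk_Iio_ordinal, Cardinal.card_ord]
  set γ : Ordi := sInf {δ | #(W δ) = Cardinal.lift.{1} κ} with hγdef
  have hγmem : #(W γ) = Cardinal.lift.{1} κ := csInf_mem hΓ
  have hγmin : ∀ δ < γ, #(W δ) < Cardinal.lift.{1} κ := by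
    intro δ hδ
    refine lt_of_le_of_ne (hWle δ) fun hc => ?_
    have hγle : γ ≤ δ := csInf_le (OrderBot.bddBelow _)
      (show δ ∈ {δ | #(W δ) = Cardinal.lift.{1} κ} from hc)
    exact absurd hγle (not_le.2 hδ)
  have hγ0 : 0 < γ := by
    rcases eq_zero_or_pos γ with h | h
    · exfalso
      have : W γ = ∅ := by
        ext x; simp only [hW, Set.mem_setOf_eq, Set.mem_empty_iff_false, iff_false]
        rintro ⟨-, h2⟩; rw [h] at h2; exact (not_lt.2 zero_le) h2
      rw [this] at hγmem
      simp only [Cardinal.mk_emptyCollection] at hγmem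
      have hpos : (0 : Cardinal.{1}) < Cardinal.lift.{1} κ :=
        lt_of_lt_of_le Cardinal.aleph0_pos hκliftinf
      exact absurd hγmem (ne_of_lt hpos)
    · exact h
  have hγlim : Order.IsSuccLimit γ := by
    rcases Ordinal.zero_or_succ_or_isSuccLimit γ with h | ⟨β, hβ⟩ | h
    · exact absurd h (ne_of_gt hγ0)
    · exfalso
      have hsub : W γ ⊆ W β ∪ {x | x < κ.ord ∧ G x = β} := by
        intro x hx
        rcases lt_or_eq_of_le (Order.le_of_lt_succ (hβ ▸ hx.2 : G x < Order.succ β)) with h2 | h2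
        · exact Or.inl ⟨hx.1, h2⟩
        · exact Or.inr ⟨hx.1, h2⟩
      have hsing2 : #{x | x < κ.ord ∧ G x = β} ≤ 1 := by
        rw [Cardinal.le_one_iff_subsingleton]
        constructor
        rintro ⟨x, hx1, hx2⟩ ⟨y, hy1, hy2⟩
        exact Subtype.ext (hG hx1 hy1 (hx2.trans hy2.symm))
      have : #(W γ) < Cardinal.lift.{1} κ := by
        calc #(W γ) ≤ #(W β) + #{x | x < κ.ord ∧ G x = β} :=
              le_trans (Cardinal.mk_le_mk_of_subset hsub) (Cardinal.mk_union_le _ _)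
          _ < Cardinal.lift.{1} κ :=
              Cardinal.add_lt_of_lt hκliftinf (hγmin β (hβ ▸ Order.lt_succ β))
                (lt_of_le_of_lt hsing2 (lt_of_lt_of_le Cardinal.one_lt_aleph0 hκliftinf))
      exact absurd hγmem (ne_of_lt this)
    · exact h
  have hcof : (κ.ord).cof ≤ γ.cof := by
    by_contra hlt
    push_neg at hlt
    obtain ⟨ι, f, hlsub, hι⟩ := Ordinal.exists_lsub_cof γ
    have hcover : W γ ⊆ ⋃ (j : ULift.{1} ι), W (f j.down + 1) := by
      intro x hx
      obtain ⟨j, hj⟩ := (Ordinal.lt_lsub_iff).1 (hlsub ▸ hx.2)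
      exact Set.mem_iUnion.2 ⟨⟨j⟩, hx.1, hj.trans_lt (Order.lt_succ _)⟩
    have hsmall : ∀ j : ι, #(W (f j + 1)) < Cardinal.lift.{1} κ := by
      intro j
      exact hγmin _ (hγlim.succ_lt (hlsub ▸ Ordinal.lt_lsub f j))
    have hdown : ∀ j : ι, ∃ w : Cardi, Cardinal.lift.{1} w = #(W (f j + 1)) ∧ w < κ := by
      intro j
      obtain ⟨w, hw⟩ := Cardinal.mem_range_lift_of_le (hWle (f j + 1))
      exact ⟨w, hw, by rw [← Cardinal.lift_lt.{0,1}, hw]; exact hsmall j⟩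
    choose w hw hwκ using hdown
    have hsup : (⨆ j : ι, w j) < κ := by
      refine Ordinal.iSup_lt ?_ hwκ
      rw [hι]; exact hlt
    have hbig : Cardinal.lift.{1} κ ≤ Cardinal.lift.{1} ((γ.cof) * ⨆ j : ι, w j) := by
      calc Cardinal.lift.{1} κ = #(W γ) := hγmem.symm
        _ ≤ #(ULift.{1} ι) * ⨆ j : ULift.{1} ι, #(W (f j.down + 1)) :=
            le_trans (Cardinal.mk_le_mk_of_subset hcover) (Cardinal.mk_iUnion_le _)
        _ ≤ Cardinal.lift.{1} (γ.cof) * Cardinal.lift.{1} (⨆ j : ι, w j) := by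
            refine mul_le_mul' ?_ ?_
            · rw [Cardinal.mk_uLift, hι]
            · refine ciSup_le' fun j => ?_
              rw [← hw j.down]
              exact Cardinal.lift_le.2 (le_ciSup (Cardinal.bddAbove_range _) j.down)
        _ = Cardinal.lift.{1} ((γ.cof) * ⨆ j : ι, w j) := by rw [Cardinal.lift_mul]
    rw [Cardinal.lift_le] at hbig
    exact absurd hbig (not_le.2 (Cardinal.mul_lt_of_lt hκ
      (lt_of_lt_of_le hlt (le_trans (Ordinal.cof_ord_le κ) le_rfl)) hsup))
  -- stage sizes
  obtain ⟨ι2, f2, hlsub2, hι2⟩ := Ordinal.exists_lsub_cof (κ.ord)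
  set μo : Ordi := ((κ.ord).cof).ord with hμo
  have heqv : Nonempty (ι2 ≃ μo.ToType) := by
    apply Cardinal.eq.1
    rw [hι2, Cardinal.mk_toType, hμo, Cardinal.card_ord]
  obtain ⟨eqv⟩ := heqv
  set k : Ordi → Cardi := fun i => if h : i < μo then
      max (max ℵ₀ ((κ.ord).cof))
        ((f2 (eqv.symm (Ordinal.ToType.mk (o := μo) ⟨i, h⟩))).card)
    else ℵ₀ with hk
  have hk1 : ∀ i, i < μo → ℵ₀ ≤ k i ∧ k i < κ := by
    intro i h
    have hki : k i = max (max ℵ₀ ((κ.ord).cof))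
        ((f2 (eqv.symm (Ordinal.ToType.mk (o := μo) ⟨i, h⟩))).card) := by
      rw [hk]; exact dif_pos h
    rw [hki]
    refine ⟨le_max_of_le_left (le_max_left _ _), max_lt (max_lt hℵκ hsing) ?_⟩
    exact Cardinal.lt_ord.1 (hlsub2 ▸ Ordinal.lt_lsub f2 _)
  have hk2 : ∀ b, b < κ → ∃ i, ∃ h : i < μo, b < k i := by
    intro b hb
    by_contra hno
    push_neg at hno
    have hall : ∀ j : ι2, f2 j < (Order.succ b).ord := by
      intro j
      set p : Set.Iio μo := (Ordinal.ToType.mk (o := μo)).symm (eqv j) with hp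
      have hpi : (p : Ordi) < μo := p.2
      have hki : k p.1 = max (max ℵ₀ ((κ.ord).cof))
          ((f2 (eqv.symm (Ordinal.ToType.mk (o := μo) ⟨p.1, hpi⟩))).card) := by
        rw [hk]; exact dif_pos hpi
      have hroundtrip : eqv.symm (Ordinal.ToType.mk (o := μo) ⟨p.1, hpi⟩) = j := by
        show eqv.symm (Ordinal.ToType.mk (o := μo) p) = j
        rw [hp, OrderIso.apply_symm_apply, Equiv.symm_apply_apply]
      rw [hroundtrip] at hki
      have h6 : (f2 j).card ≤ b := le_trans (le_max_right _ _) (hki ▸ hno p.1 hpi)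
      exact Cardinal.lt_ord.2 (lt_of_le_of_lt h6 (Order.lt_succ b))
    have h7 : κ.ord ≤ (Order.succ b).ord := hlsub2 ▸ Ordinal.lsub_le hall
    exact absurd (Cardinal.ord_le_ord.1 h7) (not_le.2 (hlimκ b hb))
  -- the recursion spec
  have sgSpec : ∀ i, i < μo →
      ((∀ x ∈ (sg G κ.ord γ k i).1, (x < κ.ord ∧ G x < γ) ∧
        Ordinal.bsup i (fun j _ => (sg G κ.ord γ k j).2.1) ≤ x ∧
        Ordinal.bsup i (fun j _ => (sg G κ.ord γ k j).2.2) ≤ G x) ∧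
      (∀ x ∈ (sg G κ.ord γ k i).1, x < (sg G κ.ord γ k i).2.1) ∧
        (sg G κ.ord γ k i).2.1 < κ.ord ∧
      (∀ x ∈ (sg G κ.ord γ k i).1, G x < (sg G κ.ord γ k i).2.2) ∧
        (sg G κ.ord γ k i).2.2 < γ ∧
      #(sg G κ.ord γ k i).1 = Cardinal.lift.{1} (k i) ∧
      (∀ x ∈ (sg G κ.ord γ k i).1, ∀ y ∈ (sg G κ.ord γ k i).1, x < y → G x < G y)) := by
    intro i
    induction i using Ordinal.induction with
    | h i IHi =>
      intro hi
      set sξ := Ordinal.bsup i (fun j _ => (sg G κ.ord γ k j).2.1) with hsξdef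
      set sη := Ordinal.bsup i (fun j _ => (sg G κ.ord γ k j).2.2) with hsηdef
      have hsξ : sξ < κ.ord := by
        apply Ordinal.bsup_lt_ord
        · exact Cardinal.lt_ord.1 (hμo ▸ hi)
        · intro j hj
          exact (IHi j hj (hj.trans hi)).2.2.1
      have hsη : sη < γ := by
        apply Ordinal.bsup_lt_ord
        · exact lt_of_lt_of_le (Cardinal.lt_ord.1 (hμo ▸ hi)) hcof
        · intro j hj
          exact (IHi j hj (hj.trans hi)).2.2.2.2.1
      set A' : Set Ordi := {x | (x < κ.ord ∧ G x < γ) ∧ sξ ≤ x ∧ sη ≤ G x} with hA'def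
      have hA'Iio : A' ⊆ Set.Iio κ.ord := fun x hx => hx.1.1
      have hA'κ : #A' = Cardinal.lift.{1} κ := by
        have hA'le : #A' ≤ Cardinal.lift.{1} κ := by
          calc #A' ≤ #(Set.Iio κ.ord) := Cardinal.mk_le_mk_of_subset hA'Iio
            _ = Cardinal.lift.{1} κ := by rw [Ordinal.mk_Iio_ordinal, Cardinal.card_ord]
        refine le_antisymm hA'le ?_
        by_contra hlt2
        push_neg at hlt2
        have hsub2 : W γ ⊆ A' ∪ ((W γ ∩ Set.Iio sξ) ∪ W sη) := by
          intro x hx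
          by_cases h1 : sξ ≤ x
          · by_cases h2 : sη ≤ G x
            · exact Or.inl ⟨⟨hx.1, hx.2⟩, h1, h2⟩
            · exact Or.inr (Or.inr ⟨hx.1, not_le.1 h2⟩)
          · exact Or.inr (Or.inl ⟨hx, not_le.1 h1⟩)
        have hs1 : #(W γ ∩ Set.Iio sξ : Set Ordi) < Cardinal.lift.{1} κ := by
          calc #(W γ ∩ Set.Iio sξ : Set Ordi) ≤ #(Set.Iio sξ) :=
                Cardinal.mk_le_mk_of_subset Set.inter_subset_right
            _ = Cardinal.lift.{1} sξ.card := Ordinal.mk_Iio_ordinal sξ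
            _ < Cardinal.lift.{1} κ := Cardinal.lift_lt.2 (Cardinal.lt_ord.1 hsξ)
        have hs2 : #(W sη) < Cardinal.lift.{1} κ := hγmin _ hsη
        have hchain : #(W γ) ≤ #A' + (#(W γ ∩ Set.Iio sξ : Set Ordi) + #(W sη)) := by
          refine le_trans (Cardinal.mk_le_mk_of_subset hsub2) ?_
          refine le_trans (Cardinal.mk_union_le _ _) ?_
          exact add_le_add le_rfl (Cardinal.mk_union_le _ _)
        rw [hγmem] at hchain
        have : Cardinal.lift.{1} κ < Cardinal.lift.{1} κ :=
          lt_of_le_of_lt hchain (Cardinal.add_lt_of_lt hκliftinf hlt2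
            (Cardinal.add_lt_of_lt hκliftinf hs1 hs2))
        exact absurd this (lt_irrefl _)
      have hkκ := hk1 i hi
      have hcκ : Order.succ (k i) < κ := hlimκ _ hkκ.2
      have hδ : ∃ δ, δ < γ ∧
          Cardinal.lift.{1} (Order.succ (k i)) ≤ #{x | x ∈ A' ∧ G x < δ} := by
        have hνreg := Cardinal.isRegular_cof hγlim
        have hνκ : γ.cof ≠ κ := fun hEq => absurd (hEq ▸ hνreg.2) (not_le.2 hsing)
        rcases lt_or_gt_of_ne hνκ with hν | hν
        · by_contra hno2
          push_neg at hno2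
          obtain ⟨ι3, f3, hlsub3, hι3⟩ := Ordinal.exists_lsub_cof γ
          have hcover3 : A' ⊆ ⋃ (j : ULift.{1} ι3), {x | x ∈ A' ∧ G x < f3 j.down + 1} := by
            intro x hx
            obtain ⟨j, hj⟩ := (Ordinal.lt_lsub_iff).1 (hlsub3 ▸ hx.1.2)
            exact Set.mem_iUnion.2 ⟨⟨j⟩, hx, hj.trans_lt (Order.lt_succ _)⟩
          have hbig2 : Cardinal.lift.{1} κ ≤
              Cardinal.lift.{1} (γ.cof) * Cardinal.lift.{1} (Order.succ (k i)) := by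
            calc Cardinal.lift.{1} κ = #A' := hA'κ.symm
              _ ≤ #(ULift.{1} ι3) * ⨆ j : ULift.{1} ι3, #{x | x ∈ A' ∧ G x < f3 j.down + 1} :=
                  le_trans (Cardinal.mk_le_mk_of_subset hcover3) (Cardinal.mk_iUnion_le _)
              _ ≤ Cardinal.lift.{1} (γ.cof) * Cardinal.lift.{1} (Order.succ (k i)) := by
                  refine mul_le_mul' ?_ ?_
                  · rw [Cardinal.mk_uLift, hι3]
                  · refine ciSup_le' fun j => ?_
                    exact (hno2 _ (hγlim.succ_lt (hlsub3 ▸ Ordinal.lt_lsub f3 j.down))).le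
          rw [← Cardinal.lift_mul, Cardinal.lift_le] at hbig2
          exact absurd hbig2 (not_le.2 (Cardinal.mul_lt_of_lt hκ hν hcκ))
        · set δ := Ordinal.bsup κ.ord (fun x _ => if G x < γ then G x + 1 else 0) with hδdef
          have hδγ : δ < γ := by
            apply Ordinal.bsup_lt_ord
            · rw [Cardinal.card_ord]; exact hν
            · intro x hx
              by_cases h8 : G x < γ
              · rw [if_pos h8]; exact hγlim.succ_lt h8
              · rw [if_neg h8]; exact hγ0
          refine ⟨δ, hδγ, ?_⟩
          have hsub4 : A' ⊆ {x | x ∈ A' ∧ G x < δ} := by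
            intro x hx
            refine ⟨hx, ?_⟩
            have h5 : (if G x < γ then G x + 1 else 0) ≤ δ :=
              Ordinal.le_bsup (fun x _ => if G x < γ then G x + 1 else 0) x hx.1.1
            rw [if_pos hx.1.2] at h5
            exact lt_of_lt_of_le (Order.lt_succ _) h5
          calc Cardinal.lift.{1} (Order.succ (k i)) ≤ Cardinal.lift.{1} κ :=
                Cardinal.lift_le.2 hcκ.le
            _ = #A' := hA'κ.symm
            _ ≤ _ := Cardinal.mk_le_mk_of_subset hsub4
      obtain ⟨δ, hδγ, hδc⟩ := hδ
      have hXlt : Cardinal.lift.{1} (k i) < #{x | x ∈ A' ∧ G x < δ} :=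
        lt_of_lt_of_le (Cardinal.lift_lt.2 (Order.lt_succ _)) hδc
      obtain ⟨u, b, huX, hotyu, hucard, hbX, hub⟩ := initSeg _ (k i) hXlt
      have huIio : u ⊆ Set.Iio κ.ord := fun x hx => (huX hx).1.1.1
      obtain ⟨B, hBu, hBcard, hBinc⟩ :=
        IH (k i) hkκ.2 hkκ.1 u hotyu G (hG.mono huIio)
      have hex : ∃ P : Set Ordi × Ordi × Ordi,
          (∀ x ∈ P.1, (x < κ.ord ∧ G x < γ) ∧
            Ordinal.bsup i (fun j _ => (sg G κ.ord γ k j).2.1) ≤ x ∧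
            Ordinal.bsup i (fun j _ => (sg G κ.ord γ k j).2.2) ≤ G x) ∧
          (∀ x ∈ P.1, x < P.2.1) ∧ P.2.1 < κ.ord ∧
          (∀ x ∈ P.1, G x < P.2.2) ∧ P.2.2 < γ ∧
          #P.1 = Cardinal.lift.{1} (k i) ∧
          (∀ x ∈ P.1, ∀ y ∈ P.1, x < y → G x < G y) := by
        refine ⟨(B, b, δ), ?_, ?_, ?_, ?_, ?_, ?_, ?_⟩
        · intro x hx
          have hxA : x ∈ A' := (huX (hBu hx)).1
          exact ⟨hxA.1, hsξdef ▸ hxA.2.1, hsηdef ▸ hxA.2.2⟩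
        · intro x hx
          exact hub x (hBu hx)
        · exact hbX.1.1.1
        · intro x hx
          exact (huX (hBu hx)).2
        · exact hδγ
        · exact hBcard
        · exact hBinc
      have hspec := Classical.epsilon_spec hex
      rw [← sg_eq G κ.ord γ k i] at hspec
      exact hspec
  set v : Set Ordi := {x | ∃ i, ∃ _ : i < μo, x ∈ (sg G κ.ord γ k i).1} with hv
  have hvIio : v ⊆ Set.Iio κ.ord := by
    rintro x ⟨i, hi, hx⟩
    exact ((sgSpec i hi).1 x hx).1.1
  refine ⟨v, hvIio, ?_, ?_⟩
  · have hvle : #v ≤ Cardinal.lift.{1} κ := by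
      calc #v ≤ #(Set.Iio κ.ord) := Cardinal.mk_le_mk_of_subset hvIio
        _ = Cardinal.lift.{1} κ := by rw [Ordinal.mk_Iio_ordinal, Cardinal.card_ord]
    refine le_antisymm hvle ?_
    by_contra hlt
    push_neg at hlt
    obtain ⟨w, hw⟩ := Cardinal.mem_range_lift_of_le hvle
    have hwκ : w < κ := by rw [← Cardinal.lift_lt.{0,1}, hw]; exact hlt
    obtain ⟨i, hi, hik⟩ := hk2 w hwκ
    have hsub : (sg G κ.ord γ k i).1 ⊆ v := fun x hx => ⟨i, hi, hx⟩
    have h9 := Cardinal.mk_le_mk_of_subset hsub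
    rw [(sgSpec i hi).2.2.2.2.2.1, ← hw] at h9
    exact absurd (Cardinal.lift_le.1 h9) (not_le.2 hik)
  · rintro x ⟨i, hi, hx⟩ y ⟨j, hj, hy⟩ hxy
    rcases lt_trichotomy i j with h | h | h
    · have h1 : G x < (sg G κ.ord γ k i).2.2 := (sgSpec i hi).2.2.2.1 x hx
      have h2 : (sg G κ.ord γ k i).2.2 ≤
          Ordinal.bsup j (fun l _ => (sg G κ.ord γ k l).2.2) := Ordinal.le_bsup _ i h
      have h3 := ((sgSpec j hj).1 y hy).2.2
      exact lt_of_lt_of_le h1 (le_trans h2 h3)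
    · subst h
      exact (sgSpec i hi).2.2.2.2.2.2 x hx y hy hxy
    · exfalso
      have h1 : y < (sg G κ.ord γ k j).2.1 := (sgSpec j hj).2.1 y hy
      have h2 : (sg G κ.ord γ k j).2.1 ≤
          Ordinal.bsup i (fun l _ => (sg G κ.ord γ k l).2.1) := Ordinal.le_bsup _ j h
      have h3 := ((sgSpec i hi).1 x hx).2.1
      exact absurd hxy (not_lt.2 (le_of_lt (lt_of_lt_of_le h1 (le_trans h2 h3))))

lemma keyFactAux : ∀ κ : Cardi, (∀ κ' : Cardi, κ' < κ → KeyP κ') → KeyP κ := by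
  intro κ IH hκ s hs g hg
  have hiso : Nonempty ((Set.Iio κ.ord : Set Ordi) ≃o s) := by
    have h1 : oty (Set.Iio κ.ord) = oty s := by rw [oty_Iio, hs]
    have h2 : Ordinal.type ((· < ·) : ↥(Set.Iio κ.ord) → ↥(Set.Iio κ.ord) → Prop) =
        Ordinal.type ((· < ·) : s → s → Prop) := h1
    obtain ⟨e⟩ := Ordinal.type_eq.1 h2
    exact ⟨OrderIso.ofRelIsoLT e⟩
  obtain ⟨e⟩ := hiso
  classical
  set E : Ordi → Ordi := fun x => if h : x < κ.ord then (e ⟨x, h⟩ : Ordi) else 0 with hE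
  have hEeq : ∀ x (h : x < κ.ord), E x = (e ⟨x, h⟩ : Ordi) := by
    intro x h; rw [hE]; exact dif_pos h
  have hEs : ∀ x (h : x < κ.ord), E x ∈ s := by
    intro x h; rw [hEeq x h]; exact (e ⟨x, h⟩).2
  have hElt : ∀ x y (hx : x < κ.ord) (hy : y < κ.ord), (x < y ↔ E x < E y) := by
    intro x y hx hy
    rw [hEeq x hx, hEeq y hy, Subtype.coe_lt_coe, e.lt_iff_lt]; exact Iff.rfl
  set G : Ordi → Ordi := g ∘ E with hGdef
  have hGinj : Set.InjOn G (Set.Iio κ.ord) := by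
    intro a ha b hb hab
    have h3 : E a = E b := hg (hEs a ha) (hEs b hb) hab
    by_contra hne
    rcases lt_or_gt_of_ne hne with h4 | h4
    · exact absurd h3 (ne_of_lt ((hElt a b ha hb).1 h4))
    · exact absurd h3.symm (ne_of_lt ((hElt b a hb ha).1 h4))
  suffices hv : ∃ v, v ⊆ Set.Iio κ.ord ∧ #v = Cardinal.lift.{1} κ ∧
      ∀ x ∈ v, ∀ y ∈ v, x < y → G x < G y by
    obtain ⟨v, hvIio, hvcard, hvinc⟩ := hv
    refine ⟨E '' v, ?_, ?_, ?_⟩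
    · rintro _ ⟨x, hx, rfl⟩
      exact hEs x (hvIio hx)
    · rw [Cardinal.mk_image_eq_of_injOn _ _ ?_, hvcard]
      intro a ha b hb hab
      by_contra hne
      rcases lt_or_gt_of_ne hne with h4 | h4
      · exact absurd hab (ne_of_lt ((hElt a b (hvIio ha) (hvIio hb)).1 h4))
      · exact absurd hab.symm (ne_of_lt ((hElt b a (hvIio hb) (hvIio ha)).1 h4))
    · rintro _ ⟨x, hx, rfl⟩ _ ⟨y, hy, rfl⟩ hxy
      have hxy' : x < y := by
        rcases lt_trichotomy x y with h4 | h4 | h4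
        · exact h4
        · subst h4; exact absurd hxy (lt_irrefl _)
        · exact absurd hxy (not_lt.2 (le_of_lt ((hElt y x (hvIio hy) (hvIio hx)).1 h4)))
      exact hvinc x hx y hy hxy'
  rcases lt_or_eq_of_le (Ordinal.cof_ord_le κ) with hsing | hreg
  · exact keySingular κ hκ hsing IH G hGinj
  · exact keyRegular κ hκ hreg G hGinj

lemma keyFact (κ : Cardi) : KeyP κ :=
  WellFounded.induction wellFounded_lt κ keyFactAux

/-- Ps'(λ, κ) implies Ps(λ, κ). -/
theorem stmt_5 (lam kap : Cardi) (h0 : ℵ₀ ≤ kap) (h1 : kap < lam)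
    (h : Ps' lam kap.ord) : Ps lam kap := by

  classical
  obtain ⟨F', hF1, hF2, hF3, hF4⟩ := h
  set gf : (Ordi →. Ordi) → Ordi → Ordi :=
    fun f a => if h : (f a).Dom then (f a).get h else 0 with hgf
  have hgfmem : ∀ (f : Ordi →. Ordi) (a : Ordi), a ∈ f.Dom → gf f a ∈ f a := by
    intro f a ha
    have ha' : (f a).Dom := ha
    have : gf f a = (f a).get ha' := by rw [hgf]; exact dif_pos ha'
    rw [this]
    exact Part.get_mem ha'
  have hchoice : ∀ f : Ordi →. Ordi, ∃ u : Set Ordi, f ∈ F' →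
      (u ⊆ f.Dom ∧ #u = Cardinal.lift.{1} kap ∧
        ∀ a ∈ u, ∀ b ∈ u, a < b → gf f a < gf f b) := by
    intro f
    by_cases hf : f ∈ F'
    · obtain ⟨hdom, hinj, hotp⟩ := hF2 f hf
      have hot : oty f.Dom = Ordinal.lift.{1} kap.ord := otpEq_iff.1 hotp
      have hgfinj : Set.InjOn (gf f) f.Dom := by
        intro a ha b hb hab
        exact hinj a b (gf f a) (hgfmem f a ha) (hab ▸ hgfmem f b hb)
      obtain ⟨u, hu1, hu2, hu3⟩ := keyFact kap h0 f.Dom hot (gf f) hgfinj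
      exact ⟨u, fun _ => ⟨hu1, hu2, hu3⟩⟩
    · exact ⟨∅, fun hc => absurd hc hf⟩
  choose U hU using hchoice
  set hatf : (Ordi →. Ordi) → (Ordi →. Ordi) :=
    fun f => fun a => ⟨a ∈ U f ∧ (f a).Dom, fun h => (f a).get h.2⟩ with hhat
  have hmemhat : ∀ f a b, b ∈ hatf f a ↔ (a ∈ U f ∧ b ∈ f a) := by
    intro f a b
    constructor
    · rintro ⟨⟨h1, h2⟩, rfl⟩
      exact ⟨h1, Part.get_mem h2⟩
    · rintro ⟨h1, h2⟩
      obtain ⟨hd, hget⟩ := h2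
      exact ⟨⟨h1, hd⟩, hget⟩
  have hdomhat : ∀ f, f ∈ F' → (hatf f).Dom = U f := by
    intro f hf
    ext a
    show (a ∈ U f ∧ (f a).Dom) ↔ a ∈ U f
    exact ⟨fun h => h.1, fun h => ⟨h, (hU f hf).1 h⟩⟩
  refine ⟨hatf '' F', le_trans Cardinal.mk_image_le hF1, ?_, ?_, ?_⟩
  · rintro _ ⟨f, hf, rfl⟩
    obtain ⟨hdom, hinj, hotp⟩ := hF2 f hf
    obtain ⟨hu1, hu2, hu3⟩ := hU f hf
    refine ⟨⟨?_, ?_⟩, ?_, ?_⟩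
    · rw [hdomhat f hf]
      exact fun a ha => hdom.1 (hu1 ha)
    · intro a b hb
      exact hdom.2 a b ((hmemhat f a b).1 hb).2
    · intro a b c d hc hd hab
      obtain ⟨hcu, hcf⟩ := (hmemhat f a c).1 hc
      obtain ⟨hdu, hdf⟩ := (hmemhat f b d).1 hd
      have h5 := hu3 a hcu b hdu hab
      rwa [Part.mem_unique (hgfmem f a (hu1 hcu)) hcf,
        Part.mem_unique (hgfmem f b (hu1 hdu)) hdf] at h5
    · rw [hdomhat f hf]
      exact otpEq_iff.2 (oty_eq_of_card hu1 (otpEq_iff.1 hotp) hu2)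
  · rintro _ ⟨f, hf, rfl⟩ _ ⟨f', hf', rfl⟩ hne
    have hneff : f ≠ f' := fun hc => hne (by rw [hc])
    obtain ⟨⟨c, hcdom, hcb⟩, -⟩ := hF3 f hf f' hf' hneff
    have hotf : oty f.Dom = Ordinal.lift.{1} kap.ord := otpEq_iff.1 (hF2 f hf).2.2
    refine small_of_bounded hotf hcdom ?_ ?_
    · intro x hx
      exact hx.1.2
    · intro x hx
      exact hcb x ⟨hx.1.2, hx.2.2⟩
  · intro g hg1 hg2
    obtain ⟨f, hf, hext⟩ := hF4 g hg1 hg2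
    refine ⟨hatf f, Set.mem_image_of_mem _ hf, ?_⟩
    intro a b hb
    exact hext a b ((hmemhat f a b).1 hb).2
end

section
/- If δ < λ is a limit ordinal and λ^{|δ|} = λ, then Ps'(λ, δ) holds. -/
open Cardinal Set

namespace Stmt6Aux

noncomputable def trI (lam : Cardi) (hpos : (0:Ordi) < lam.ord) (x : Ordi) :
    ↥(Set.Iio lam.ord) :=
  if h : x < lam.ord then ⟨x, h⟩ else ⟨0, hpos⟩

theorem trI_eq_of_lt (lam : Cardi) (hpos : (0:Ordi) < lam.ord) {x : Ordi}
    (h : x < lam.ord) : trI lam hpos x = ⟨x, h⟩ := dif_pos h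

abbrev TT (lam : Cardi) (δ : Ordi) : Type 1 :=
  Σ p : ↥(Set.Iio δ), (↥(Set.Iio (p.1 : Ordi)) → ↥(Set.Iio lam.ord))

noncomputable def Gf (lam : Cardi)
    (e : ↥(Set.Iio lam.ord) ≃ ↥(Set.Iio lam.ord) × ↥(Set.Iio lam.ord)) :
    Ordi → Ordi :=
  Ordinal.lt_wf.fix (C := fun _ => Ordi) (fun ξ IH =>
    if h : ξ < lam.ord then
      sInf {η | ((e ⟨ξ, h⟩).1 : Ordi) ≤ η ∧ η < lam.ord ∧
        ∀ ζ, ∀ _ : ζ < ξ, IH ζ ‹ζ < ξ› ≠ η}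
    else 0)

theorem Gf_eq (lam : Cardi)
    (e : ↥(Set.Iio lam.ord) ≃ ↥(Set.Iio lam.ord) × ↥(Set.Iio lam.ord)) (ξ : Ordi) :
    Gf lam e ξ =
      if h : ξ < lam.ord then
        sInf {η | ((e ⟨ξ, h⟩).1 : Ordi) ≤ η ∧ η < lam.ord ∧
          ∀ ζ, ∀ _ : ζ < ξ, Gf lam e ζ ≠ η}
      else 0 :=
  WellFounded.fix_eq _ _ _

theorem Gf_nonempty (lam : Cardi) (hinf : ℵ₀ ≤ lam) {ξ x : Ordi}
    (hx : x < lam.ord) (hξ : ξ < lam.ord) (G : Ordi → Ordi) :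
    {η | x ≤ η ∧ η < lam.ord ∧ ∀ ζ, ∀ _ : ζ < ξ, G ζ ≠ η}.Nonempty := by
  by_contra hemp
  rw [Set.not_nonempty_iff_eq_empty] at hemp
  have key : ∀ η : ↥(Set.Ico x lam.ord), ∃ ζ : ↥(Set.Iio ξ), G ζ.1 = η.1 := by
    rintro ⟨η, hη1, hη2⟩
    by_contra hc
    push_neg at hc
    have hmem : η ∈ {η | x ≤ η ∧ η < lam.ord ∧ ∀ ζ, ∀ _ : ζ < ξ, G ζ ≠ η} :=
      ⟨hη1, hη2, fun ζ hζ => hc ⟨ζ, hζ⟩⟩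
    rw [hemp] at hmem
    exact hmem
  choose φ hφ using key
  have hinj : Function.Injective φ := by
    intro a b hab
    exact Subtype.ext (by rw [← hφ a, ← hφ b, hab])
  have h1 : #(↥(Set.Ico x lam.ord)) ≤ #(↥(Set.Iio ξ)) := Cardinal.mk_le_of_injective hinj
  have h2 : #(↥(Set.Iio ξ)) < Cardinal.lift.{1} lam := by
    rw [Ordinal.mk_Iio_ordinal]
    exact Cardinal.lift_lt.2 (Cardinal.lt_ord.1 hξ)
  have h3 : Cardinal.lift.{1} lam ≤ Cardinal.lift.{1} x.card + #(↥(Set.Ico x lam.ord)) := by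
    have hsub : Set.Iio lam.ord = Set.Iio x ∪ Set.Ico x lam.ord :=
      (Set.Iio_union_Ico_eq_Iio hx.le).symm
    calc Cardinal.lift.{1} lam = #(↥(Set.Iio lam.ord)) := by
          rw [Ordinal.mk_Iio_ordinal, Cardinal.card_ord]
      _ = #(↥(Set.Iio x ∪ Set.Ico x lam.ord)) := by rw [← hsub]
      _ ≤ #(↥(Set.Iio x)) + #(↥(Set.Ico x lam.ord)) := Cardinal.mk_union_le _ _
      _ = Cardinal.lift.{1} x.card + #(↥(Set.Ico x lam.ord)) := by
          rw [Ordinal.mk_Iio_ordinal]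
  have h4 : Cardinal.lift.{1} x.card < Cardinal.lift.{1} lam :=
    Cardinal.lift_lt.2 (Cardinal.lt_ord.1 hx)
  exact absurd (lt_of_le_of_lt h3
    (Cardinal.add_lt_of_lt (Cardinal.aleph0_le_lift.2 hinf) h4 (h1.trans_lt h2)))
    (lt_irrefl _)

theorem Gf_mem (lam : Cardi) (hinf : ℵ₀ ≤ lam)
    (e : ↥(Set.Iio lam.ord) ≃ ↥(Set.Iio lam.ord) × ↥(Set.Iio lam.ord))
    {ξ : Ordi} (h : ξ < lam.ord) :
    ((e ⟨ξ, h⟩).1 : Ordi) ≤ Gf lam e ξ ∧ Gf lam e ξ < lam.ord ∧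
      ∀ ζ, ∀ _ : ζ < ξ, Gf lam e ζ ≠ Gf lam e ξ := by
  have hne := Gf_nonempty lam hinf (e ⟨ξ, h⟩).1.2 h (Gf lam e)
  have hmem := csInf_mem hne
  rw [Gf_eq lam e ξ, dif_pos h]
  exact hmem


-- the pairing function
noncomputable def Pf (lam : Cardi) (hpos : (0:Ordi) < lam.ord)
    (e : ↥(Set.Iio lam.ord) ≃ ↥(Set.Iio lam.ord) × ↥(Set.Iio lam.ord))
    (x y : Ordi) : Ordi :=
  Gf lam e ((e.symm (trI lam hpos x, trI lam hpos y)).1 : Ordi)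

theorem Pf_lt (lam : Cardi) (hinf : ℵ₀ ≤ lam) (hpos : (0:Ordi) < lam.ord)
    (e : ↥(Set.Iio lam.ord) ≃ ↥(Set.Iio lam.ord) × ↥(Set.Iio lam.ord))
    (x y : Ordi) : Pf lam hpos e x y < lam.ord :=
  (Gf_mem lam hinf e (e.symm (trI lam hpos x, trI lam hpos y)).2).2.1

theorem Pf_le (lam : Cardi) (hinf : ℵ₀ ≤ lam) (hpos : (0:Ordi) < lam.ord)
    (e : ↥(Set.Iio lam.ord) ≃ ↥(Set.Iio lam.ord) × ↥(Set.Iio lam.ord))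
    {x : Ordi} (y : Ordi) (hx : x < lam.ord) : x ≤ Pf lam hpos e x y := by
  have hξ := (e.symm (trI lam hpos x, trI lam hpos y)).2
  have h1 := (Gf_mem lam hinf e hξ).1
  have h2 : (⟨_, hξ⟩ : ↥(Set.Iio lam.ord)) = e.symm (trI lam hpos x, trI lam hpos y) :=
    Subtype.ext rfl
  rw [h2, Equiv.apply_symm_apply] at h1
  calc x = ((trI lam hpos x : ↥(Set.Iio lam.ord)) : Ordi) := by
        rw [trI_eq_of_lt lam hpos hx]
    _ ≤ _ := h1

theorem Gf_injOn (lam : Cardi) (hinf : ℵ₀ ≤ lam)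
    (e : ↥(Set.Iio lam.ord) ≃ ↥(Set.Iio lam.ord) × ↥(Set.Iio lam.ord))
    {ξ ζ : Ordi} (hξ : ξ < lam.ord) (hζ : ζ < lam.ord)
    (hG : Gf lam e ξ = Gf lam e ζ) : ξ = ζ := by
  rcases lt_trichotomy ξ ζ with hlt | heq | hgt
  · exact absurd hG ((Gf_mem lam hinf e hζ).2.2 ξ hlt)
  · exact heq
  · exact absurd hG.symm ((Gf_mem lam hinf e hξ).2.2 ζ hgt)

theorem Pf_inj (lam : Cardi) (hinf : ℵ₀ ≤ lam) (hpos : (0:Ordi) < lam.ord)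
    (e : ↥(Set.Iio lam.ord) ≃ ↥(Set.Iio lam.ord) × ↥(Set.Iio lam.ord))
    {x y x' y' : Ordi} (hx : x < lam.ord) (hy : y < lam.ord)
    (hx' : x' < lam.ord) (hy' : y' < lam.ord)
    (hP : Pf lam hpos e x y = Pf lam hpos e x' y') : x = x' ∧ y = y' := by
  have h1 := Gf_injOn lam hinf e (e.symm (trI lam hpos x, trI lam hpos y)).2
    (e.symm (trI lam hpos x', trI lam hpos y')).2 hP
  have h2 : e.symm (trI lam hpos x, trI lam hpos y)
      = e.symm (trI lam hpos x', trI lam hpos y') := Subtype.ext h1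
  have h3 := e.symm.injective h2
  rw [trI_eq_of_lt lam hpos hx, trI_eq_of_lt lam hpos hy,
    trI_eq_of_lt lam hpos hx', trI_eq_of_lt lam hpos hy', Prod.mk.injEq] at h3
  exact ⟨congrArg Subtype.val h3.1, congrArg Subtype.val h3.2⟩


noncomputable def eeF (lam : Cardi) (δ : Ordi) (hpos : (0:Ordi) < lam.ord)
    (cd : TT lam δ → Ordi) (P : Ordi → Ordi → Ordi) (u : Ordi → Ordi) :
    Ordi → Ordi :=
  Ordinal.lt_wf.fix (C := fun _ => Ordi) (fun α IH =>
    if h : α < δ then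
      P (Ordinal.blsub α (fun β hβ => IH β hβ))
        (cd ⟨⟨α, h⟩, fun ρ => trI lam hpos (u ρ.1)⟩)
    else 0)

theorem eeF_eq (lam : Cardi) (δ : Ordi) (hpos : (0:Ordi) < lam.ord)
    (cd : TT lam δ → Ordi) (P : Ordi → Ordi → Ordi) (u : Ordi → Ordi) (α : Ordi) :
    eeF lam δ hpos cd P u α =
      if h : α < δ then
        P (Ordinal.blsub α (fun β _ => eeF lam δ hpos cd P u β))
          (cd ⟨⟨α, h⟩, fun ρ => trI lam hpos (u ρ.1)⟩)
      else 0 :=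
  WellFounded.fix_eq _ _ _

section

variable (lam : Cardi) (δ : Ordi) (hpos : (0:Ordi) < lam.ord)
  (cd : TT lam δ → Ordi) (P : Ordi → Ordi → Ordi)
  (hinf : ℵ₀ ≤ lam)
  (hcof : δ.card < (lam.ord).cof)
  (hcdlt : ∀ t, cd t < lam.ord)
  (hcdinj : Function.Injective cd)
  (hPlt : ∀ x y, x < lam.ord → y < lam.ord → P x y < lam.ord)
  (hPle : ∀ x y, x < lam.ord → y < lam.ord → x ≤ P x y)
  (hPinj : ∀ x y x' y', x < lam.ord → y < lam.ord → x' < lam.ord → y' < lam.ord →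
    P x y = P x' y' → x = x' ∧ y = y')

include hcof hcdlt hPlt in
theorem ee_lt (u : Ordi → Ordi) : ∀ α, α < δ → eeF lam δ hpos cd P u α < lam.ord := by
  intro α
  induction α using WellFounded.induction Ordinal.lt_wf with
  | _ α IH =>
    intro hα
    rw [eeF_eq, dif_pos hα]
    apply hPlt
    · apply Ordinal.blsub_lt_ord
      · exact lt_of_le_of_lt (Ordinal.card_le_card hα.le) hcof
      · exact fun β hβ => IH β hβ (hβ.trans hα)
    · exact hcdlt _

include hcof hcdlt hPlt in
theorem ee_blsub_lt (u : Ordi → Ordi) {α : Ordi} (hα : α < δ) :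
    Ordinal.blsub α (fun β _ => eeF lam δ hpos cd P u β) < lam.ord := by
  apply Ordinal.blsub_lt_ord
  · exact lt_of_le_of_lt (Ordinal.card_le_card hα.le) hcof
  · exact fun β hβ => ee_lt lam δ hpos cd P hcof hcdlt hPlt u β (hβ.trans hα)

include hcof hcdlt hPlt hPle in
theorem ee_mono (u : Ordi → Ordi) {α β : Ordi} (hαβ : α < β) (hβ : β < δ) :
    eeF lam δ hpos cd P u α < eeF lam δ hpos cd P u β := by
  have h1 : eeF lam δ hpos cd P u α <
      Ordinal.blsub β (fun ρ _ => eeF lam δ hpos cd P u ρ) :=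
    Ordinal.lt_blsub _ α hαβ
  have h2 := hPle (Ordinal.blsub β (fun ρ _ => eeF lam δ hpos cd P u ρ))
    (cd ⟨⟨β, hβ⟩, fun ρ => trI lam hpos (u ρ.1)⟩)
    (ee_blsub_lt lam δ hpos cd P hcof hcdlt hPlt u hβ) (hcdlt _)
  rw [eeF_eq lam δ hpos cd P u β, dif_pos hβ]
  exact lt_of_lt_of_le h1 h2

include hcof hcdlt hcdinj hPlt hPinj in
theorem ee_inj_aux {u v : Ordi → Ordi} {α β : Ordi} (hα : α < δ) (hβ : β < δ)
    (heq : eeF lam δ hpos cd P u α = eeF lam δ hpos cd P v β) :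
    α = β ∧ ∀ ρ, ρ < α → trI lam hpos (u ρ) = trI lam hpos (v ρ) := by
  rw [eeF_eq lam δ hpos cd P u α, dif_pos hα,
    eeF_eq lam δ hpos cd P v β, dif_pos hβ] at heq
  obtain ⟨-, hc⟩ := hPinj _ _ _ _
    (ee_blsub_lt lam δ hpos cd P hcof hcdlt hPlt u hα) (hcdlt _)
    (ee_blsub_lt lam δ hpos cd P hcof hcdlt hPlt v hβ) (hcdlt _) heq
  have ht := hcdinj hc
  have h1 : α = β := congrArg (fun t : TT lam δ => ((t.1 : ↥(Set.Iio δ)) : Ordi)) ht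
  subst h1
  refine ⟨rfl, ?_⟩
  have h2 : (fun ρ : ↥(Set.Iio ((⟨α, hα⟩ : ↥(Set.Iio δ)) : Ordi)) => trI lam hpos (u ρ.1))
      = fun ρ => trI lam hpos (v ρ.1) := by
    obtain ⟨-, h3⟩ := Sigma.mk.inj_iff.mp ht
    exact eq_of_heq h3
  intro ρ hρ
  exact congrFun h2 ⟨ρ, hρ⟩

end

noncomputable def Wf (lam : Cardi) (δ : Ordi) (hpos : (0:Ordi) < lam.ord)
    (cd : TT lam δ → Ordi) (P : Ordi → Ordi → Ordi) (g : Ordi → Ordi) :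
    Ordi → Ordi × Ordi :=
  Ordinal.lt_wf.fix (C := fun _ => Ordi × Ordi) (fun α IH =>
    if h : α < δ then
      (P (Ordinal.blsub α (fun β hβ => (IH β hβ).1))
         (cd ⟨⟨α, h⟩, fun ρ => trI lam hpos ((IH ρ.1 ρ.2).2)⟩),
       g (P (Ordinal.blsub α (fun β hβ => (IH β hβ).1))
         (cd ⟨⟨α, h⟩, fun ρ => trI lam hpos ((IH ρ.1 ρ.2).2)⟩)))
    else (0, 0))

theorem Wf_eq (lam : Cardi) (δ : Ordi) (hpos : (0:Ordi) < lam.ord)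
    (cd : TT lam δ → Ordi) (P : Ordi → Ordi → Ordi) (g : Ordi → Ordi) (α : Ordi) :
    Wf lam δ hpos cd P g α =
      if h : α < δ then
        (P (Ordinal.blsub α (fun β _ => (Wf lam δ hpos cd P g β).1))
           (cd ⟨⟨α, h⟩, fun ρ => trI lam hpos ((Wf lam δ hpos cd P g ρ.1).2)⟩),
         g (P (Ordinal.blsub α (fun β _ => (Wf lam δ hpos cd P g β).1))
           (cd ⟨⟨α, h⟩, fun ρ => trI lam hpos ((Wf lam δ hpos cd P g ρ.1).2)⟩)))
      else (0, 0) :=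
  WellFounded.fix_eq _ _ _

theorem Wf_fst (lam : Cardi) (δ : Ordi) (hpos : (0:Ordi) < lam.ord)
    (cd : TT lam δ → Ordi) (P : Ordi → Ordi → Ordi) (g : Ordi → Ordi) :
    ∀ α, (Wf lam δ hpos cd P g α).1 =
      eeF lam δ hpos cd P (fun x => (Wf lam δ hpos cd P g x).2) α := by
  intro α
  induction α using WellFounded.induction Ordinal.lt_wf with
  | _ α IH =>
    rw [Wf_eq, eeF_eq]
    by_cases h : α < δ
    · rw [dif_pos h, dif_pos h]
      have hb : (Ordinal.blsub α (fun β _ => (Wf lam δ hpos cd P g β).1))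
          = Ordinal.blsub α
            (fun β _ => eeF lam δ hpos cd P (fun x => (Wf lam δ hpos cd P g x).2) β) := by
        congr 1
        funext β hβ
        exact IH β hβ
      rw [hb]
    · rw [dif_neg h, dif_neg h]



theorem Wf_snd (lam : Cardi) (δ : Ordi) (hpos : (0:Ordi) < lam.ord)
    (cd : TT lam δ → Ordi) (P : Ordi → Ordi → Ordi) (g : Ordi → Ordi) {α : Ordi}
    (hα : α < δ) :
    (Wf lam δ hpos cd P g α).2 = g ((Wf lam δ hpos cd P g α).1) := by
  conv_lhs => rw [Wf_eq, dif_pos hα]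
  conv_rhs => rw [Wf_eq, dif_pos hα]

theorem Wf_snd_zero (lam : Cardi) (δ : Ordi) (hpos : (0:Ordi) < lam.ord)
    (cd : TT lam δ → Ordi) (P : Ordi → Ordi → Ordi) (g : Ordi → Ordi) {α : Ordi}
    (hα : ¬ α < δ) : (Wf lam δ hpos cd P g α).2 = 0 := by
  rw [Wf_eq, dif_neg hα]

noncomputable def fU (δ : Ordi) (E : Ordi → Ordi) (u : Ordi → Ordi) : Ordi →. Ordi :=
  fun x => ⟨∃ α, α < δ ∧ E α = x, fun hx => u hx.choose⟩

theorem fU_mem {δ : Ordi} {E u : Ordi → Ordi} {a b : Ordi} :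
    b ∈ fU δ E u a ↔ ∃ h : (∃ α, α < δ ∧ E α = a), u h.choose = b :=
  Part.mem_mk_iff

theorem fU_dom {δ : Ordi} {E u : Ordi → Ordi} :
    (fU δ E u).Dom = {x | ∃ α, α < δ ∧ E α = x} := rfl

theorem fU_dom_mem {δ : Ordi} {E u : Ordi → Ordi} {x : Ordi} :
    x ∈ (fU δ E u).Dom ↔ ∃ α, α < δ ∧ E α = x := Iff.rfl


end Stmt6Aux

open Stmt6Aux in
/-- If `δ < λ` is a limit ordinal and `λ ^ |δ| = λ` then Ps'(λ, δ) holds. -/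
theorem stmt_6 (lam : Cardi) (δ : Ordi) (hlim : Order.IsSuccLimit δ) (hδ : δ < lam.ord)
    (h : lam ^ δ.card = lam) : Ps' lam δ := by
  classical
  have hω : (Ordinal.omega0 : Ordi) ≤ δ := Ordinal.omega0_le_of_isSuccLimit hlim
  have hδcard : δ.card < lam := Cardinal.lt_ord.1 hδ
  have hinf : ℵ₀ ≤ lam := by
    have h1 : (Ordinal.omega0 : Ordi) < lam.ord := lt_of_le_of_lt hω hδ
    have h2 := Cardinal.lt_ord.1 h1
    rw [Ordinal.card_omega0] at h2
    exact h2.le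
  have hpos : (0:Ordi) < lam.ord := lt_of_le_of_lt (zero_le (a := δ)) hδ
  have hlam0 : lam ≠ 0 := (aleph0_pos.trans_le hinf).ne'
  have hcof : δ.card < (lam.ord).cof := by
    by_contra hc
    push_neg at hc
    have h1 : lam < lam ^ (lam.ord).cof := Cardinal.lt_power_cof hinf
    have h2 : lam ^ (lam.ord).cof ≤ lam ^ δ.card :=
      Cardinal.power_le_power_left hlam0 hc
    rw [h] at h2
    exact absurd (h1.trans_le h2) (lt_irrefl _)
  have mkIio : #(↥(Set.Iio lam.ord)) = Cardinal.lift.{1} lam := by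
    rw [Ordinal.mk_Iio_ordinal, Cardinal.card_ord]
  have hliftinf : ℵ₀ ≤ Cardinal.lift.{1} lam := Cardinal.aleph0_le_lift.2 hinf
  have hprod : #(↥(Set.Iio lam.ord)) = #(↥(Set.Iio lam.ord) × ↥(Set.Iio lam.ord)) := by
    rw [Cardinal.mk_prod, Cardinal.lift_id, mkIio, Cardinal.mul_eq_self hliftinf]
  obtain ⟨e⟩ := Cardinal.eq.1 hprod
  have hTT : #(TT lam δ) ≤ #(↥(Set.Iio lam.ord)) := by
    rw [mkIio, Cardinal.mk_sigma]
    calc (Cardinal.sum fun p : ↥(Set.Iio δ) => #(↥(Set.Iio (p.1:Ordi)) → ↥(Set.Iio lam.ord)))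
        ≤ Cardinal.sum fun _ : ↥(Set.Iio δ) => Cardinal.lift.{1} lam := by
          apply Cardinal.sum_le_sum
          intro p
          rw [← Cardinal.power_def, mkIio, Ordinal.mk_Iio_ordinal]
          calc Cardinal.lift.{1} lam ^ Cardinal.lift.{1} ((p.1 : Ordi)).card
              ≤ Cardinal.lift.{1} lam ^ Cardinal.lift.{1} δ.card := by
                apply Cardinal.power_le_power_left (by simp [hlam0])
                exact Cardinal.lift_le.2 (Ordinal.card_le_card p.2.le)
            _ = Cardinal.lift.{1} (lam ^ δ.card) := (Cardinal.lift_power _ _).symm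
            _ = Cardinal.lift.{1} lam := by rw [h]
      _ = #(↥(Set.Iio δ)) * Cardinal.lift.{1} lam := Cardinal.sum_const' _ _
      _ ≤ Cardinal.lift.{1} lam * Cardinal.lift.{1} lam := by
          apply mul_le_mul' ?_ le_rfl
          rw [Ordinal.mk_Iio_ordinal]
          exact Cardinal.lift_le.2 hδcard.le
      _ = Cardinal.lift.{1} lam := Cardinal.mul_eq_self hliftinf
  obtain ⟨emb⟩ := (Cardinal.le_def _ _).1 hTT
  set cd : TT lam δ → Ordi := fun t => ((emb t : ↥(Set.Iio lam.ord)) : Ordi) with hcd_def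
  have hcdlt : ∀ t, cd t < lam.ord := fun t => (emb t).2
  have hcdinj : Function.Injective cd := fun a b hab => emb.injective (Subtype.ext hab)
  set P : Ordi → Ordi → Ordi := Pf lam hpos e with hP_def
  have hPlt : ∀ x y, x < lam.ord → y < lam.ord → P x y < lam.ord :=
    fun x y _ _ => Pf_lt lam hinf hpos e x y
  have hPle : ∀ x y, x < lam.ord → y < lam.ord → x ≤ P x y :=
    fun x y hx _ => Pf_le lam hinf hpos e y hx
  have hPinj : ∀ x y x' y', x < lam.ord → y < lam.ord → x' < lam.ord → y' < lam.ord →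
      P x y = P x' y' → x = x' ∧ y = y' :=
    fun x y x' y' hx hy hx' hy' hp => Pf_inj lam hinf hpos e hx hy hx' hy' hp
  refine ⟨(fun u => fU δ (eeF lam δ hpos cd P u) u) ''
    {u : Ordi → Ordi | (∀ β, β < δ → u β < lam.ord) ∧ (∀ β, ¬ β < δ → u β = 0) ∧
      Set.InjOn u (Set.Iio δ)}, ?_, ?_, ?_, ?_⟩
  · -- cardinality
    refine le_trans Cardinal.mk_image_le ?_
    have hj : #(↥{u : Ordi → Ordi | (∀ β, β < δ → u β < lam.ord) ∧ (∀ β, ¬ β < δ → u β = 0) ∧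
        Set.InjOn u (Set.Iio δ)}) ≤ #(↥(Set.Iio δ) → ↥(Set.Iio lam.ord)) := by
      apply Cardinal.mk_le_of_injective
        (f := fun u p => (⟨u.1 p.1, u.2.1 p.1 p.2⟩ : ↥(Set.Iio lam.ord)))
      intro a b hab
      apply Subtype.ext
      funext x
      by_cases hx : x < δ
      · exact congrArg Subtype.val (congrFun hab ⟨x, hx⟩)
      · rw [a.2.2.1 x hx, b.2.2.1 x hx]
    refine hj.trans ?_
    rw [← Cardinal.power_def, mkIio, Ordinal.mk_Iio_ordinal, ← Cardinal.lift_power, h]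
  · -- each member is good
    rintro f ⟨u, hu, rfl⟩
    refine ⟨⟨?_, ?_⟩, ?_, ?_⟩
    · rintro x ⟨α, hα, rfl⟩
      exact ee_lt lam δ hpos cd P hcof hcdlt hPlt u α hα
    · intro a b hb
      obtain ⟨hdom, rfl⟩ := fU_mem.1 hb
      exact hu.1 _ hdom.choose_spec.1
    · intro a b c hca hcb
      obtain ⟨h1, rfl⟩ := fU_mem.1 hca
      obtain ⟨h2, hval⟩ := fU_mem.1 hcb
      have e1 := h1.choose_spec
      have e2 := h2.choose_spec
      have h3 : h2.choose = h1.choose := hu.2.2 e2.1 e1.1 hval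
      rw [← e1.2, ← e2.2, h3]
    · have hmono : StrictMono (fun p : ↥(Set.Iio δ) => eeF lam δ hpos cd P u p.1) := by
        intro p q hpq
        exact ee_mono lam δ hpos cd P hcof hcdlt hPlt hPle u
          (Subtype.coe_lt_coe.2 hpq) q.2
      have hset : (fU δ (eeF lam δ hpos cd P u) u).Dom =
          Set.range (fun p : ↥(Set.Iio δ) => eeF lam δ hpos cd P u p.1) := by
        ext x
        constructor
        · rintro ⟨α, hα, rfl⟩
          exact ⟨⟨α, hα⟩, rfl⟩
        · rintro ⟨p, rfl⟩
          exact ⟨p.1, p.2, rfl⟩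
      exact ⟨(OrderIso.setCongr _ _ hset).trans (StrictMono.orderIso _ hmono).symm⟩
  · -- bounded intersections
    rintro f ⟨u, hu, rfl⟩ f' ⟨v, hv, rfl⟩ hne
    have huv : u ≠ v := by
      rintro rfl
      exact hne rfl
    have hneS : {β : Ordi | u β ≠ v β}.Nonempty := Function.ne_iff.1 huv
    set γ := sInf {β : Ordi | u β ≠ v β} with hγ_def
    have hγmem : u γ ≠ v γ := csInf_mem hneS
    have hγδ : γ < δ := by
      by_contra hc
      exact hγmem (by rw [hu.2.1 γ hc, hv.2.1 γ hc])
    have hsucc : Order.succ γ < δ := hlim.succ_lt hγδ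
    have key : ∀ x, x ∈ (fU δ (eeF lam δ hpos cd P u) u).Dom ∩
        (fU δ (eeF lam δ hpos cd P v) v).Dom →
        ∃ α, α ≤ γ ∧ eeF lam δ hpos cd P u α = x ∧ eeF lam δ hpos cd P v α = x := by
      rintro x ⟨⟨α, hα, rfl⟩, β, hβ, hEv⟩
      obtain ⟨hab, hpt⟩ := ee_inj_aux lam δ hpos cd P hcof hcdlt hcdinj hPlt hPinj hα hβ
        hEv.symm
      have hαγ : α ≤ γ := by
        by_contra hc
        push_neg at hc
        apply hγmem
        have h5 := hpt γ hc
        rw [trI_eq_of_lt lam hpos (hu.1 γ hγδ), trI_eq_of_lt lam hpos (hv.1 γ hγδ)] at h5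
        exact congrArg Subtype.val h5
      exact ⟨α, hαγ, rfl, hab ▸ hEv⟩
    constructor
    · refine ⟨eeF lam δ hpos cd P u (Order.succ γ), ⟨Order.succ γ, hsucc, rfl⟩, ?_⟩
      intro x hx
      obtain ⟨α, hαγ, rfl, -⟩ := key x hx
      exact ee_mono lam δ hpos cd P hcof hcdlt hPlt hPle u
        (hαγ.trans_lt (Order.lt_succ γ)) hsucc
    · refine ⟨eeF lam δ hpos cd P v (Order.succ γ), ⟨Order.succ γ, hsucc, rfl⟩, ?_⟩
      intro x hx
      obtain ⟨α, hαγ, -, hEv⟩ := key x hx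
      rw [← hEv]
      exact ee_mono lam δ hpos cd P hcof hcdlt hPlt hPle v
        (hαγ.trans_lt (Order.lt_succ γ)) hsucc
  · -- covering
    intro g hg1 hg2
    set u : Ordi → Ordi := fun x => (Wf lam δ hpos cd P g x).2 with hu_def
    have hWfst : ∀ α, (Wf lam δ hpos cd P g α).1 = eeF lam δ hpos cd P u α :=
      Wf_fst lam δ hpos cd P g
    have hEu : ∀ α, α < δ → u α = g (eeF lam δ hpos cd P u α) := by
      intro α hα
      calc u α = g ((Wf lam δ hpos cd P g α).1) := Wf_snd lam δ hpos cd P g hα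
        _ = g (eeF lam δ hpos cd P u α) := by rw [hWfst α]
    have huU : u ∈ {u : Ordi → Ordi | (∀ β, β < δ → u β < lam.ord) ∧
        (∀ β, ¬ β < δ → u β = 0) ∧ Set.InjOn u (Set.Iio δ)} := by
      refine ⟨?_, ?_, ?_⟩
      · intro β hβ
        rw [hEu β hβ]
        exact hg1 _ (ee_lt lam δ hpos cd P hcof hcdlt hPlt u β hβ)
      · intro β hβ
        exact Wf_snd_zero lam δ hpos cd P g hβ
      · intro a ha b hb hab
        have h1 : eeF lam δ hpos cd P u a = eeF lam δ hpos cd P u b := by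
          apply hg2 (ee_lt lam δ hpos cd P hcof hcdlt hPlt u a ha)
            (ee_lt lam δ hpos cd P hcof hcdlt hPlt u b hb)
          rw [← hEu a ha, ← hEu b hb]
          exact hab
        rcases lt_trichotomy a b with hlt | heq | hgt
        · exact absurd h1 (ne_of_lt (ee_mono lam δ hpos cd P hcof hcdlt hPlt hPle u hlt hb))
        · exact heq
        · exact absurd h1.symm
            (ne_of_lt (ee_mono lam δ hpos cd P hcof hcdlt hPlt hPle u hgt ha))
    refine ⟨fU δ (eeF lam δ hpos cd P u) u, ⟨u, huU, rfl⟩, ?_⟩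
    intro a b hb
    obtain ⟨hdom, rfl⟩ := fU_mem.1 hb
    obtain ⟨hch1, hch2⟩ := hdom.choose_spec
    have hfin := (hEu _ hch1).symm
    rw [hch2] at hfin
    exact hfin
end

section
/- If χ = λ ≥ μ > |α| and λ₁ < λ implies λ₁^{|α|} < λ, then Pr₃(χ, λ, μ, α) holds. -/
open Cardinal Set

section helpers
lemma otpEq_empty {s : Set Ordi} (hs : ∀ x, x ∉ s) : OtpEq s 0 := by
  haveI : IsEmpty ↥s := ⟨fun x => hs x.1 x.2⟩
  haveI : IsEmpty ↥(Iio (0:Ordi)) := ⟨fun x => (not_lt_of_ge (zero_le (a := x.1)) (Set.mem_Iio.1 x.2))⟩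
  exact ⟨{ toEquiv := Equiv.equivOfIsEmpty _ _, map_rel_iff' := fun {a} => isEmptyElim a }⟩

lemma otpEq_single {s : Set Ordi} {x : Ordi} (hs : ∀ y, y ∈ s ↔ y = x) : OtpEq s 1 := by
  have e : s ≃ ↥(Iio (1:Ordi)) :=
    { toFun := fun _ => ⟨0, Set.mem_Iio.2 zero_lt_one⟩
      invFun := fun _ => ⟨x, (hs x).2 rfl⟩
      left_inv := fun a => Subtype.ext (((hs a.1).1 a.2).symm)
      right_inv := fun b => Subtype.ext (by
        have hb := b.2
        rw [mem_Iio, Ordinal.lt_one_iff_zero] at hb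
        exact hb.symm) }
  have hmap : ∀ a b : ↥s, e a ≤ e b ↔ a ≤ b := by
    intro a b
    constructor
    · intro _
      have ha := (hs a.1).1 a.2
      have hb := (hs b.1).1 b.2
      show a.1 ≤ b.1
      rw [ha, hb]
    · intro _
      have ha := (hs a.1).1 a.2
      have hb := (hs b.1).1 b.2
      exact le_of_eq (congrArg e (Subtype.ext (ha.trans hb.symm)))
  exact ⟨{ toEquiv := e, map_rel_iff' := @fun a b => hmap a b }⟩

open Ordinal in
lemma exists_subset_otpEq {S : Set Ordi} {α : Ordi}
    (h : Cardinal.lift.{1} (Order.succ α.card) ≤ #↥S) : ∃ D ⊆ S, OtpEq D α := by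
  set r := ((· < ·) : ↥S → ↥S → Prop) with hr
  have hα : Ordinal.lift.{1} α ≤ Ordinal.type r := by
    by_contra hlt
    push_neg at hlt
    have h2 := Ordinal.card_le_card hlt.le
    rw [Ordinal.card_type, ← Ordinal.lift_card] at h2
    have h3 := h.trans h2
    rw [Cardinal.lift_le] at h3
    exact (Order.lt_succ α.card).not_ge h3
  have hlt : ∀ β : ↥(Iio α), Ordinal.lift.{1} β.1 < Ordinal.type r :=
    fun β => lt_of_lt_of_le (Ordinal.lift_lt.2 β.2) hα
  let e : ↥(Iio α) → Ordi := fun β => ((Ordinal.enum r ⟨_, hlt β⟩ : ↥S) : Ordi)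
  have he : StrictMono e := by
    intro β₁ β₂ hb
    have : r (Ordinal.enum r ⟨_, hlt β₁⟩) (Ordinal.enum r ⟨_, hlt β₂⟩) :=
      Ordinal.enum_lt_enum.2 (Subtype.mk_lt_mk.2 (Ordinal.lift_lt.2 hb))
    exact this
  refine ⟨Set.range e, ?_, ⟨(he.orderIso).symm⟩⟩
  rintro x ⟨β, rfl⟩
  exact (Ordinal.enum r ⟨_, hlt β⟩).2

lemma dom_res (f : Ordi → Ordi) (s : Set Ordi) : (PFun.res f s).Dom = s := by
  ext x
  rw [PFun.mem_dom]
  constructor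
  · rintro ⟨y, hy⟩; exact ((PFun.mem_res f s x y).1 hy).1
  · intro hx; exact ⟨f x, (PFun.mem_res f s x (f x)).2 ⟨hx, rfl⟩⟩
end helpers

/-- If `χ = λ ≥ μ > |α|` and `λ₁ < λ → λ₁ ^ |α| < λ` then Pr₃(χ, λ, μ, α) holds. -/
theorem stmt_9 (chi lam mu : Cardi) (α : Ordi)
    (h1 : chi = lam) (h2 : mu ≤ lam) (h3 : α.card < mu)
    (h4 : ∀ lam1 : Cardi, lam1 < lam → lam1 ^ α.card < lam) :
    Pr3 chi lam mu α := by
  subst chi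
  have hmu0 : 0 < mu := lt_of_le_of_lt zero_le h3
  have hlam0 : 0 < lam := lt_of_lt_of_le hmu0 h2
  by_cases hinf : ℵ₀ ≤ lam
  case pos =>
    have hkl : α.card < lam := h3.trans_le h2
    have hθμ : Order.succ α.card ≤ mu := Order.succ_le_of_lt h3
    set θord : Ordi := (Order.succ α.card).ord with hθorddef
    have hαθ : α < θord := Cardinal.lt_ord.2 (Order.lt_succ α.card)
    have hθμo : θord ≤ mu.ord := Cardinal.ord_le_ord.2 hθμ
    have hlimit : Order.IsSuccLimit lam.ord := Cardinal.isSuccLimit_ord hinf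
    have hthl : Order.succ α.card < lam := by
      rcases lt_or_ge α.card ℵ₀ with hfin | hinf'
      · obtain ⟨n, hn⟩ := Cardinal.lt_aleph0.1 hfin
        rw [hn, ← Cardinal.nat_succ]
        exact lt_of_lt_of_le (Cardinal.nat_lt_aleph0 _) hinf
      · have h2κ : (2:Cardi) ≤ α.card := le_trans (le_of_lt (Cardinal.nat_lt_aleph0 2)) hinf'
        have e1 : Order.succ α.card ≤ 2 ^ α.card := Order.succ_le_of_lt (Cardinal.cantor _)
        have e2 : (2:Cardi) ^ α.card ≤ α.card ^ α.card :=
          Cardinal.power_le_power_right h2κ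
        exact lt_of_le_of_lt (e1.trans e2) (h4 _ hkl)
    set Fsub : Ordi → Set (Ordi →. Ordi) := fun i₂ =>
      {f : Ordi →. Ordi | f.Dom ⊆ Iio θord ∧ OtpEq f.Dom α ∧ ∀ a b, b ∈ f a → b < i₂}
      with hFsubdef
    refine ⟨⋃ i₂ ∈ Iio lam.ord, Fsub i₂, ?_, ?_, ?_⟩
    · -- cardinality
      have hFsubcard : ∀ i₂ : ↥(Iio lam.ord), #↥(Fsub i₂.1) ≤ Cardinal.lift.{1} lam := by
        rintro ⟨i₂, hi₂⟩
        set P : Set (Ordi × Ordi) := (Iio θord) ×ˢ (Iio i₂) with hPdef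
        set Φ : ↥(Fsub i₂) → Set (Ordi × Ordi) := fun f => {p | p.2 ∈ f.1 p.1} with hΦdef
        have hΦsub : ∀ f : ↥(Fsub i₂), Φ f ⊆ P := by
          rintro f ⟨a, b⟩ hp
          have hdom : a ∈ f.1.Dom := (PFun.mem_dom _ _).2 ⟨b, hp⟩
          exact ⟨f.2.1 hdom, f.2.2.2 a b hp⟩
        have hΦcard : ∀ f : ↥(Fsub i₂), #↥(Φ f) ≤ Cardinal.lift.{1} α.card := by
          intro f
          have e1 : #↥(Φ f) ≤ #↥(f.1.Dom) := by
            refine Cardinal.mk_le_of_injective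
              (f := fun p => (⟨p.1.1, (PFun.mem_dom _ _).2 ⟨p.1.2, p.2⟩⟩ : ↥(f.1.Dom))) ?_
            rintro ⟨⟨a, b⟩, hab⟩ ⟨⟨c, d⟩, hcd⟩ h
            have hac : a = c := congrArg Subtype.val h
            subst hac
            have hbd : b = d := Part.mem_unique hab hcd
            subst hbd
            rfl
          have e2 : #↥(f.1.Dom) = Cardinal.lift.{1} α.card := by
            obtain ⟨iso⟩ := f.2.2.1
            rw [Cardinal.mk_congr iso.toEquiv, Ordinal.mk_Iio_ordinal]
          rw [e2] at e1
          exact e1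
        have hΦinj : Function.Injective Φ := by
          intro f f' h
          apply Subtype.ext
          apply PFun.ext
          intro a b
          exact ⟨fun hb => (Set.ext_iff.1 h (a, b)).1 hb,
            fun hb => (Set.ext_iff.1 h (a, b)).2 hb⟩
        have step1 : #↥(Fsub i₂) ≤
            #{t : Set (Ordi × Ordi) // t ⊆ P ∧ #↥t ≤ Cardinal.lift.{1} α.card} := by
          refine Cardinal.mk_le_of_injective
            (f := fun f => (⟨Φ f, hΦsub f, hΦcard f⟩ :
              {t : Set (Ordi × Ordi) // t ⊆ P ∧ #↥t ≤ Cardinal.lift.{1} α.card})) ?_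
          intro f f' h
          exact hΦinj (congrArg Subtype.val h)
        have step2 : #{t : Set (Ordi × Ordi) // t ⊆ P ∧ #↥t ≤ Cardinal.lift.{1} α.card} ≤
            max #↥P ℵ₀ ^ Cardinal.lift.{1} α.card := Cardinal.mk_bounded_subset_le _ _
        have hPcard : #↥P = Cardinal.lift.{1} (Order.succ α.card * i₂.card) := by
          rw [hPdef]
          rw [Cardinal.mk_congr (Equiv.Set.prod _ _)]
          rw [Cardinal.mk_prod, Cardinal.lift_id, Cardinal.lift_id,
            Ordinal.mk_Iio_ordinal, Ordinal.mk_Iio_ordinal, Cardinal.card_ord,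
            ← Cardinal.lift_mul]
        have hν : i₂.card < lam := Cardinal.lt_ord.1 hi₂
        have hprod : Order.succ α.card * i₂.card < lam :=
          Cardinal.mul_lt_of_lt hinf hthl hν
        have hpow : (max (Order.succ α.card * i₂.card) ℵ₀) ^ α.card ≤ lam := by
          rcases lt_or_ge (max (Order.succ α.card * i₂.card) ℵ₀) lam with h | h
          · exact (h4 _ h).le
          · have hm : max (Order.succ α.card * i₂.card) ℵ₀ = ℵ₀ := by
              rcases max_choice (Order.succ α.card * i₂.card) ℵ₀ with heq | heq
              · rw [heq] at h; exact absurd hprod (not_lt.2 h)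
              · exact heq
            have hlamω : lam = ℵ₀ := le_antisymm (hm ▸ h) hinf
            have hκfin : α.card < ℵ₀ := lt_of_lt_of_le h3 (h2.trans hlamω.le)
            obtain ⟨n, hn⟩ := Cardinal.lt_aleph0.1 hκfin
            rw [hm, hlamω, hn, Cardinal.power_natCast]
            exact Cardinal.power_nat_le le_rfl
        have step3 : max #↥P ℵ₀ ^ Cardinal.lift.{1} α.card ≤ Cardinal.lift.{1} lam := by
          have : (ℵ₀ : Cardinal.{1}) = Cardinal.lift.{1} ℵ₀ := (Cardinal.lift_aleph0.{1,0}).symm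
          rw [hPcard, this, ← Cardinal.lift_max, ← Cardinal.lift_power, Cardinal.lift_le]
          exact hpow
        exact step1.trans (step2.trans step3)
      haveI : Nonempty ↥(Iio lam.ord) :=
        ⟨⟨0, Cardinal.lt_ord.2 (by rw [Ordinal.card_zero]; exact hlam0)⟩⟩
      have hb : #↥(⋃ i₂ ∈ Iio lam.ord, Fsub i₂) ≤
          #↥(Iio lam.ord) * ⨆ i₂ : ↥(Iio lam.ord), #↥(Fsub i₂.1) :=
        Cardinal.mk_biUnion_le _ _
      have hsup : (⨆ i₂ : ↥(Iio lam.ord), #↥(Fsub i₂.1)) ≤ Cardinal.lift.{1} lam :=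
        ciSup_le' hFsubcard
      have hIio : #↥(Iio lam.ord) = Cardinal.lift.{1} lam := by
        rw [Ordinal.mk_Iio_ordinal, Cardinal.card_ord]
      refine hb.trans ?_
      rw [hIio]
      calc Cardinal.lift.{1} lam * ⨆ i₂ : ↥(Iio lam.ord), #↥(Fsub i₂.1)
          ≤ Cardinal.lift.{1} lam * Cardinal.lift.{1} lam := mul_le_mul_right hsup _
        _ = Cardinal.lift.{1} lam := by
            rw [← Cardinal.lift_mul, Cardinal.mul_eq_self hinf]
    · -- properties
      intro f hf
      obtain ⟨i₂, hi₂, hf⟩ := mem_iUnion₂.1 hf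
      exact ⟨fun a ha => lt_of_lt_of_le (hf.1 ha) hθμo,
        fun a b hb => (hf.2.2 a b hb).trans hi₂, hf.2.1⟩
    · -- covering
      intro g hg
      set sup : Ordi := ⨆ x : α.ToType,
        (g (((Ordinal.ToType.mk (o := α)).symm x : ↥(Iio α)) : Ordi) + 1) with hsupdef
      have hmem_lt : ∀ x : α.ToType,
          (((Ordinal.ToType.mk (o := α)).symm x : ↥(Iio α)) : Ordi) < mu.ord :=
        fun x => lt_of_lt_of_le (lt_trans ((Ordinal.ToType.mk (o := α)).symm x).2 hαθ) hθμo
      rcases lt_or_ge sup lam.ord with hcase | hcase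
      · -- bounded case: restrict g to Iio α
        refine ⟨PFun.res g (Iio α), mem_biUnion hcase ?_, ?_⟩
        · refine ⟨?_, ?_, ?_⟩
          · rw [dom_res]; exact fun a ha => lt_trans ha hαθ
          · rw [dom_res]; exact ⟨OrderIso.refl _⟩
          · intro a b hb
            obtain ⟨ha, rfl⟩ := (PFun.mem_res g (Iio α) a b).1 hb
            have hle : g a + 1 ≤ sup := by
              have := le_ciSup (Ordinal.bddAbove_range fun x : α.ToType =>
                (g (((Ordinal.ToType.mk (o := α)).symm x : ↥(Iio α)) : Ordi) + 1))
                ((Ordinal.ToType.mk (o := α)) ⟨a, ha⟩)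
              rwa [OrderIso.symm_apply_apply] at this
            have hlt : g a < g a + 1 := by
              rw [Ordinal.add_one_eq_succ]; exact Order.lt_succ _
            exact lt_of_lt_of_le hlt hle
        · intro a b hb
          exact (((PFun.mem_res g (Iio α) a b).1 hb).2).symm ▸ rfl
      · -- unbounded case
        have hκinf : ℵ₀ ≤ α.card := by
          by_contra hfin
          push_neg at hfin
          have hslt : sup < lam.ord := by
            refine Ordinal.iSup_lt_ord ?_ ?_
            · rw [Cardinal.mk_toType]
              exact lt_of_lt_of_le hfin (Ordinal.aleph0_le_cof.2 hlimit)
            · intro x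
              have := hg _ (hmem_lt x)
              rw [Ordinal.add_one_eq_succ]
              exact hlimit.succ_lt this
          exact hslt.not_ge hcase
        have hα0 : 0 < α := pos_iff_ne_zero.2 (fun h0 => by
          rw [h0, Ordinal.card_zero] at hκinf
          exact (Cardinal.aleph0_pos).not_ge hκinf)
        set S : Ordi → Set Ordi := fun j => {x | x < θord ∧ g x ≤ g j} with hSdef
        have hcov : Iio θord ⊆ ⋃ j ∈ Iio α, S j := by
          intro x hx
          have hgx : g x < lam.ord := hg x (lt_of_lt_of_le hx hθμo)
          have hlt2 : g x < sup := lt_of_lt_of_le hgx hcase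
          rw [hsupdef, Ordinal.lt_iSup_iff] at hlt2
          obtain ⟨t, ht⟩ := hlt2
          rw [Ordinal.add_one_eq_succ, Order.lt_succ_iff] at ht
          exact mem_biUnion ((Ordinal.ToType.mk (o := α)).symm t).2 ⟨hx, ht⟩
        have hj : ∃ j ∈ Iio α, ∃ D ⊆ S j, OtpEq D α := by
          by_contra hno
          push_neg at hno
          have hsmall : ∀ j : ↥(Iio α), #↥(S j.1) ≤ Cardinal.lift.{1} α.card := by
            intro j
            by_contra hbig
            push_neg at hbig
            have hbig2 : Cardinal.lift.{1} (Order.succ α.card) ≤ #↥(S j.1) := by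
              rw [Cardinal.lift_succ]; exact Order.succ_le_of_lt hbig
            obtain ⟨D, hD1, hD2⟩ := exists_subset_otpEq hbig2
            exact hno j.1 j.2 D hD1 hD2
          haveI : Nonempty ↥(Iio α) := ⟨⟨0, hα0⟩⟩
          have hx1 : #↥(Iio θord) ≤ #↥(Iio α) * ⨆ j : ↥(Iio α), #↥(S j.1) :=
            (Cardinal.mk_le_mk_of_subset hcov).trans (Cardinal.mk_biUnion_le _ _)
          rw [Ordinal.mk_Iio_ordinal, Ordinal.mk_Iio_ordinal, Cardinal.card_ord] at hx1
          have hx2 : (⨆ j : ↥(Iio α), #↥(S j.1)) ≤ Cardinal.lift.{1} α.card :=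
            ciSup_le' hsmall
          have hx3 : Cardinal.lift.{1} (Order.succ α.card) ≤
              Cardinal.lift.{1} α.card * Cardinal.lift.{1} α.card :=
            hx1.trans (mul_le_mul_right hx2 _)
          rw [← Cardinal.lift_mul, Cardinal.mul_eq_self hκinf, Cardinal.lift_le] at hx3
          exact (Order.lt_succ α.card).not_ge hx3
        obtain ⟨j₀, hj₀, D, hDS, hotp⟩ := hj
        have hgj₀ : g j₀ < lam.ord := hg j₀ (lt_of_lt_of_le (lt_trans hj₀ hαθ) hθμo)
        have hsucc : g j₀ + 1 < lam.ord := by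
          rw [Ordinal.add_one_eq_succ]; exact hlimit.succ_lt hgj₀
        refine ⟨PFun.res g D, mem_biUnion hsucc ?_, ?_⟩
        · refine ⟨?_, ?_, ?_⟩
          · rw [dom_res]; exact fun a ha => (hDS ha).1
          · rw [dom_res]; exact hotp
          · intro a b hb
            obtain ⟨ha, rfl⟩ := (PFun.mem_res g D a b).1 hb
            have := (hDS ha).2
            rw [Ordinal.add_one_eq_succ, Order.lt_succ_iff]
            exact this
        · intro a b hb
          exact ((PFun.mem_res g D a b).1 hb).2
  case neg =>
    push_neg at hinf
    -- lam finite: show α ≤ 1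
    obtain ⟨n, hn⟩ := Cardinal.lt_aleph0.1 hinf
    have hκfin : α.card < ℵ₀ := lt_of_lt_of_le h3 h2 |>.trans hinf
    obtain ⟨k, hk⟩ := Cardinal.lt_aleph0.1 hκfin
    have hk1 : k ≤ 1 := by
      by_contra hk2
      push_neg at hk2
      -- k ≥ 2, so mu ≥ 3, lam = n ≥ 3
      have hμ3 : (3 : Cardi) ≤ mu := by
        have : ((3:ℕ) : Cardi) ≤ mu := by
          have h2k : ((2:ℕ) : Cardi) ≤ α.card := by
            rw [hk]; exact (Nat.cast_le (α := Cardi)).2 hk2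
          have := Order.succ_le_of_lt (lt_of_le_of_lt h2k h3)
          calc ((3:ℕ) : Cardi) = Order.succ ((2:ℕ) : Cardi) := by
                rw [← Cardinal.nat_succ]
            _ ≤ Order.succ α.card := by
                apply Order.succ_le_succ h2k
            _ ≤ mu := Order.succ_le_of_lt h3
        exact_mod_cast this
      have hn3 : 3 ≤ n := by
        have : ((3:ℕ) : Cardi) ≤ (n : Cardi) := hμ3.trans (h2.trans_eq hn) |>.trans_eq rfl
        exact (Nat.cast_le (α := Cardi)).1 (by exact_mod_cast this)
      have hlt : ((n - 1 : ℕ) : Cardi) < lam := by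
        rw [hn]; exact (Nat.cast_lt (α := Cardi)).2 (by omega)
      have := h4 _ hlt
      rw [hk, Cardinal.power_natCast, hn] at this
      have hnat : (n - 1) ^ k < n := by exact_mod_cast this
      have hge : n ≤ (n - 1) ^ k := by
        calc n ≤ (n - 1) ^ 2 := by nlinarith [Nat.sub_add_cancel (by omega : 1 ≤ n)]
          _ ≤ (n - 1) ^ k := Nat.pow_le_pow_right (by omega) hk2
      omega
    have hα1 : α ≤ 1 := by
      by_contra hα2
      push_neg at hα2
      have : Order.succ (1 : Ordi) ≤ α := Order.succ_le_of_lt hα2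
      have hc := Ordinal.card_le_card this
      rw [Ordinal.card_succ, Ordinal.card_one] at hc
      rw [hk] at hc
      have h2c : ((2:ℕ) : Cardi) ≤ (k : Cardi) := by
        rw [Nat.cast_ofNat]
        rwa [one_add_one_eq_two] at hc
      have h2n : (2:ℕ) ≤ k := Nat.cast_le.1 h2c
      omega
    have hμord0 : (0 : Ordi) < mu.ord :=
      Cardinal.lt_ord.2 (by rw [Ordinal.card_zero]; exact hmu0)
    rcases Ordinal.le_one_iff.1 hα1 with hα | hα
    · -- α = 0
      subst hα
      refine ⟨{PFun.res (fun _ => 0) ∅}, ?_, ?_, ?_⟩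
      · rw [Cardinal.mk_singleton]
        rw [Cardinal.one_le_lift_iff]
        exact Cardinal.one_le_iff_pos.2 hlam0
      · rintro f rfl
        refine ⟨?_, ?_, ?_⟩
        · rw [dom_res]; exact empty_subset _
        · intro a b hb
          exact absurd ((PFun.mem_res _ _ a b).1 hb).1 (notMem_empty a)
        · rw [dom_res]; exact otpEq_empty (fun x => notMem_empty x)
      · intro g hg
        refine ⟨_, rfl, ?_⟩
        intro a b hb
        exact absurd ((PFun.mem_res _ _ a b).1 hb).1 (notMem_empty a)
    · -- α = 1
      subst hα
      refine ⟨(fun b => PFun.res (fun _ => b) {(0:Ordi)}) '' (Iio lam.ord), ?_, ?_, ?_⟩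
      · refine (Cardinal.mk_image_le).trans ?_
        rw [Ordinal.mk_Iio_ordinal, Cardinal.card_ord]
      · rintro f ⟨b, hb, rfl⟩
        refine ⟨?_, ?_, ?_⟩
        · rw [dom_res]
          intro a ha
          rw [mem_singleton_iff] at ha
          subst ha
          exact hμord0
        · intro a b' hb'
          obtain ⟨_, rfl⟩ := (PFun.mem_res _ _ a b').1 hb'
          exact hb
        · rw [dom_res]
          exact otpEq_single (fun y => mem_singleton_iff)
      · intro g hg
        refine ⟨PFun.res (fun _ => g 0) {(0:Ordi)}, ⟨g 0, hg 0 hμord0, rfl⟩, ?_⟩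
        intro a b hb
        obtain ⟨ha, rfl⟩ := (PFun.mem_res _ _ a b).1 hb
        rw [mem_singleton_iff] at ha
        subst ha
        rfl
end

section
/- Assume λ ≥ 2^κ ≥ θ ≥ κ ≥ ℵ₀ and λ = λ^κ. Then in 𝔥_{λ, κ, θ} there is no ste-universal graph; moreover the witnessing counterexamples can be taken bipartite. -/
open Cardinal Set

section Aux

theorem mk_Iio_toType_lt (c : Cardi) (i : c.ord.ToType) : #(Set.Iio i) < c := by
  haveI i2 : WellFoundedLT c.ord.ToType := wellFoundedLT_toType _
  haveI i3 : IsWellOrder c.ord.ToType (· < ·) := isWellOrder_lt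
  have h2 := @Ordinal.card_typein c.ord.ToType (· < ·) i3 i
  have h3 := Ordinal.typein_lt_self i
  rw [Cardinal.lt_ord] at h3
  have e : #(Set.Iio i) = #{ y // y < i } := rfl
  rw [e, ← h2]; exact h3

theorem mk_Iic_toType_lt {c : Cardi} (hc : ℵ₀ ≤ c) (i : c.ord.ToType) :
    #(Set.Iic i) < c := by
  have h1 := mk_Iio_toType_lt c i
  rw [← Set.Iio_insert]
  calc #(insert i (Set.Iio i) : Set _) ≤ #(Set.Iio i) + 1 := Cardinal.mk_insert_le
  _ < c := Cardinal.add_lt_of_lt hc h1 (lt_of_lt_of_le Cardinal.one_lt_aleph0 hc)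

variable (lam kap th : Cardi)

abbrev AuxV := (Σ i : kap.ord.ToType, (Set.Iio i → lam.ord.ToType)) ⊕
    (kap.ord.ToType → lam.ord.ToType)

variable {lam kap th}

def auxNode (η : kap.ord.ToType → lam.ord.ToType) (i : kap.ord.ToType) : AuxV lam kap :=
  Sum.inl ⟨i, fun j => η j.1⟩

lemma auxNode_fst {η η' : kap.ord.ToType → lam.ord.ToType} {i i'}
    (h : auxNode (lam := lam) η i = auxNode η' i') : i = i' :=
  congrArg Sigma.fst (Sum.inl_injective h)

lemma auxNode_agree {η η' : kap.ord.ToType → lam.ord.ToType} {i i'}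
    (h : auxNode (lam := lam) η i = auxNode η' i') : ∀ j < i, η j = η' j := by
  have h2 := Sum.inl_injective h
  have h1 : i = i' := congrArg Sigma.fst h2
  subst h1
  intro j hj
  have h3 : (fun j : Set.Iio i => η j.1) = fun j : Set.Iio i => η' j.1 :=
    eq_of_heq (Sigma.ext_iff.mp h2).2
  exact congrFun h3 ⟨j, hj⟩

def auxG (B : (kap.ord.ToType → lam.ord.ToType) → Set kap.ord.ToType) :
    SimpleGraph (AuxV lam kap) where
  Adj u w := (∃ η i, u = auxNode η i ∧ w = Sum.inr η ∧ i ∈ B η) ∨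
             (∃ η i, w = auxNode η i ∧ u = Sum.inr η ∧ i ∈ B η)
  symm := by
    constructor; rintro u w (h | h)
    · exact Or.inr h
    · exact Or.inl h
  loopless := by
    constructor; rintro u (⟨η, i, h1, h2, _⟩ | ⟨η, i, h1, h2, _⟩) <;> rw [h2] at h1 <;>
      simp [auxNode] at h1

lemma auxG_common_lt (h0 : ℵ₀ ≤ kap)
    (B : (kap.ord.ToType → lam.ord.ToType) → Set kap.ord.ToType)
    {η η' : kap.ord.ToType → lam.ord.ToType} (hne : η ≠ η') :
    #{u : AuxV lam kap | (auxG B).Adj u (Sum.inr η) ∧ (auxG B).Adj u (Sum.inr η')} < kap := by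
  obtain ⟨j0, hj0⟩ := Function.ne_iff.mp hne
  have hsub : {u : AuxV lam kap | (auxG B).Adj u (Sum.inr η) ∧ (auxG B).Adj u (Sum.inr η')}
      ⊆ (fun i => auxNode η i) '' (Set.Iic j0) := by
    rintro u ⟨h1, h2⟩
    rcases h1 with ⟨η0, i, hu, heq, _⟩ | ⟨η0, i, heq, _, _⟩
    swap
    · simp [auxNode] at heq
    obtain rfl : η0 = η := Sum.inr_injective heq.symm
    rcases h2 with ⟨η1, i', hu', heq', _⟩ | ⟨η1, i', heq', _, _⟩
    swap
    · simp [auxNode] at heq'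
    obtain rfl : η1 = η' := Sum.inr_injective heq'.symm
    have hagree := auxNode_agree (hu.symm.trans hu')
    have hle : i ≤ j0 := by
      by_contra hlt
      exact hj0 (hagree j0 (lt_of_not_ge hlt))
    exact ⟨i, hle, hu.symm⟩
  calc #{u : AuxV lam kap | (auxG B).Adj u (Sum.inr η) ∧ (auxG B).Adj u (Sum.inr η')}
      ≤ #((fun i => auxNode (lam := lam) η i) '' (Set.Iic j0)) := Cardinal.mk_le_mk_of_subset hsub
    _ ≤ #(Set.Iic j0) := Cardinal.mk_image_le
    _ < kap := mk_Iic_toType_lt h0 j0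

lemma auxG_nokbip (h0 : ℵ₀ ≤ kap) (h1 : kap ≤ th)
    (B : (kap.ord.ToType → lam.ord.ToType) → Set kap.ord.ToType) :
    NoKbip (auxG (lam := lam) B) kap th := by
  rintro ⟨A, C, hd, hA, hC, hadj⟩
  have hAnt : A.Nontrivial := by
    rw [← Set.nontrivial_coe_sort, ← Cardinal.one_lt_iff_nontrivial, hA]
    exact lt_of_lt_of_le Cardinal.one_lt_aleph0 h0
  have hCnt : C.Nontrivial := by
    rw [← Set.nontrivial_coe_sort, ← Cardinal.one_lt_iff_nontrivial, hC]
    exact lt_of_lt_of_le Cardinal.one_lt_aleph0 (h0.trans h1)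
  obtain ⟨a1, ha1, a2, ha2, hane⟩ := hAnt
  obtain ⟨c1, hc1, c2, hc2, hcne⟩ := hCnt
  rcases a1 with p | ηa
  · -- a1 is a node, so c1, c2 are branches, and A is in the common nbhd of c1 c2
    have hbr : ∀ c ∈ C, ∃ ηc, c = Sum.inr ηc ∧ (auxG B).Adj (Sum.inl p) c := by
      intro c hc
      have h := hadj _ ha1 _ hc
      rcases h with ⟨η0, i, _, hceq, _⟩ | ⟨η0, i, _, habs, _⟩
      · exact ⟨η0, hceq, hadj _ ha1 _ hc⟩
      · simp [auxNode] at habs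
    obtain ⟨η1, rfl, _⟩ := hbr c1 hc1
    obtain ⟨η2, rfl, _⟩ := hbr c2 hc2
    have hη12 : η1 ≠ η2 := fun h => hcne (by rw [h])
    have hsubA : A ⊆ {u | (auxG B).Adj u (Sum.inr η1) ∧ (auxG B).Adj u (Sum.inr η2)} :=
      fun a ha => ⟨hadj _ ha _ hc1, hadj _ ha _ hc2⟩
    have := (Cardinal.mk_le_mk_of_subset hsubA).trans_lt (auxG_common_lt h0 B hη12)
    rw [hA] at this
    exact lt_irrefl _ this
  · -- a1 is a branch; then every c ∈ C is a node, and a2 is a branch distinct from a1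
    have hc1node : ∃ q, c1 = Sum.inl q := by
      have h := hadj _ ha1 _ hc1
      rcases h with ⟨η0, i, habs, _, _⟩ | ⟨η0, i, hceq, _, _⟩
      · simp [auxNode] at habs
      · exact ⟨_, hceq⟩
    obtain ⟨q, rfl⟩ := hc1node
    have ha2br : ∃ ηb, a2 = Sum.inr ηb := by
      have h := hadj _ ha2 _ hc1
      rcases h with ⟨η0, i, _, habs, _⟩ | ⟨η0, i, _, haeq, _⟩
      · simp [auxNode] at habs
      · exact ⟨_, haeq⟩
    obtain ⟨ηb, rfl⟩ := ha2br
    have hηab : ηa ≠ ηb := fun h => hane (by rw [h])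
    have hsubC : C ⊆ {u | (auxG B).Adj u (Sum.inr ηa) ∧ (auxG B).Adj u (Sum.inr ηb)} :=
      fun c hc => ⟨((auxG B).adj_symm (hadj _ ha1 _ hc)), ((auxG B).adj_symm (hadj _ ha2 _ hc))⟩
    have := (Cardinal.mk_le_mk_of_subset hsubC).trans_lt (auxG_common_lt h0 B hηab)
    rw [hC] at this
    exact lt_irrefl _ (lt_of_le_of_lt h1 this)

lemma exists_block (h0 : ℵ₀ ≤ kap) (h1 : kap ≤ th) (h2 : th ≤ (2 : Cardi) ^ kap)
    (Gstar : SimpleGraph lam.ord.ToType) (hG : NoKbip Gstar kap th)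
    (S S' : Set kap.ord.ToType) (hdS : Disjoint S S') (hS : #S = kap) (hS' : #S' = kap)
    (η : kap.ord.ToType → lam.ord.ToType) (hη : Function.Injective η) :
    ∃ Bs : Set kap.ord.ToType, S ⊆ Bs ∧ ∀ v, {i | Gstar.Adj v (η i)} ≠ Bs := by
  by_contra hcon
  push_neg at hcon
  have hex : ∀ U : Set ↥S', ∃ v, {i | Gstar.Adj v (η i)} = S ∪ (Subtype.val '' U) :=
    fun U => hcon _ Set.subset_union_left
  choose v hv using hex
  have hrec : ∀ U : Set ↥S', Subtype.val '' U = (S ∪ Subtype.val '' U) \ S := by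
    intro U
    ext x
    constructor
    · rintro ⟨y, hy, rfl⟩
      exact ⟨Or.inr ⟨y, hy, rfl⟩, fun hxS => (Set.disjoint_left.mp hdS hxS) y.2⟩
    · rintro ⟨h | h, hns⟩
      · exact absurd h hns
      · exact h
  have hvinj : Function.Injective v := by
    intro U1 U2 h
    have he : S ∪ Subtype.val '' U1 = S ∪ Subtype.val '' U2 := by
      rw [← hv U1, ← hv U2, h]
    have : Subtype.val '' U1 = Subtype.val '' U2 := by
      rw [hrec U1, he, ← hrec U2]
    exact (Set.image_injective.mpr Subtype.val_injective) this
  have hW : th ≤ #(Set.range v) := by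
    rw [Cardinal.mk_range_eq _ hvinj, Cardinal.mk_set, hS']
    exact h2
  obtain ⟨Bv, hBvsub, hBvcard⟩ := Cardinal.le_mk_iff_exists_subset.mp hW
  apply hG
  refine ⟨η '' S, Bv, ?_, by rw [Cardinal.mk_image_eq hη]; exact hS, hBvcard, ?_⟩
  · rw [Set.disjoint_left]
    rintro a ⟨i, hiS, rfl⟩ haB
    obtain ⟨U, hU⟩ := hBvsub haB
    have hmem : i ∈ {i | Gstar.Adj (v U) (η i)} := by
      rw [hv U]; exact Or.inl hiS
    rw [hU] at hmem
    exact Gstar.loopless.irrefl _ hmem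
  · rintro a ⟨i, hiS, rfl⟩ b hb
    obtain ⟨U, hU⟩ := hBvsub hb
    have hmem : i ∈ {i | Gstar.Adj (v U) (η i)} := by
      rw [hv U]; exact Or.inl hiS
    rw [hU] at hmem
    exact hmem.symm

lemma mk_auxV (h0 : ℵ₀ ≤ kap) (hk : kap ≤ lam) (h4 : lam ^ kap = lam) :
    #(AuxV lam kap) = lam := by
  have hO : #lam.ord.ToType = lam := by rw [Cardinal.mk_toType, Cardinal.card_ord]
  have hK : #kap.ord.ToType = kap := by rw [Cardinal.mk_toType, Cardinal.card_ord]
  have hlam : ℵ₀ ≤ lam := h0.trans hk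
  have hbr : #(kap.ord.ToType → lam.ord.ToType) = lam := by
    rw [← Cardinal.power_def, hO, hK, h4]
  apply le_antisymm
  · have hnodes : #(Σ i : kap.ord.ToType, (Set.Iio i → lam.ord.ToType)) ≤ lam := by
      rw [Cardinal.mk_sigma]
      have hb : ∀ i : kap.ord.ToType, #(Set.Iio i → lam.ord.ToType) ≤ lam := by
        intro i
        rw [← Cardinal.power_def, hO]
        calc lam ^ #(Set.Iio i) ≤ lam ^ kap :=
              Cardinal.power_le_power_left (Cardinal.aleph0_pos.trans_le hlam).ne' (mk_Iio_toType_lt kap i).le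
          _ = lam := h4
      calc (Cardinal.sum fun i : kap.ord.ToType => #(Set.Iio i → lam.ord.ToType))
          ≤ Cardinal.sum fun _ : kap.ord.ToType => lam := Cardinal.sum_le_sum _ _ hb
        _ = #kap.ord.ToType * lam := Cardinal.sum_const' _ _
        _ = kap * lam := by rw [hK]
        _ ≤ lam * lam := by gcongr
        _ = lam := Cardinal.mul_eq_self hlam
    calc #(AuxV lam kap) = #(Σ i : kap.ord.ToType, (Set.Iio i → lam.ord.ToType)) +
          #(kap.ord.ToType → lam.ord.ToType) := by
          simp [Cardinal.mk_sum]
      _ ≤ lam + lam := by rw [hbr]; gcongr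
      _ = lam := Cardinal.add_eq_self hlam
  · have hinr := Cardinal.mk_le_of_injective (α := kap.ord.ToType → lam.ord.ToType)
      (β := AuxV lam kap) (f := Sum.inr) Sum.inr_injective
    rwa [hbr] at hinr

end Aux

/-- If `λ ≥ 2^κ ≥ θ ≥ κ ≥ ℵ₀` and `λ = λ^κ`, then in `𝔥_{λ,κ,θ}` there is no ste-universal
graph; moreover the counterexamples can be taken bipartite. -/
theorem stmt_15 (lam th kap : Cardi) (h0 : ℵ₀ ≤ kap) (h1 : kap ≤ th)
    (h2 : th ≤ (2 : Cardi) ^ kap) (h3 : (2 : Cardi) ^ kap ≤ lam)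
    (h4 : lam ^ kap = lam) :
    ∀ Gstar : SimpleGraph (Ordinal.ToType lam.ord), NoKbip Gstar kap th →
      ∃ G : SimpleGraph (Ordinal.ToType lam.ord), NoKbip G kap th ∧
        IsBipartite G ∧ ∀ f, ¬ StrongEmb G Gstar f := by
  intro Gstar hGstar
  have hlamk : kap ≤ lam := (Cardinal.cantor kap).le.trans h3
  have hlam : ℵ₀ ≤ lam := h0.trans hlamk
  have hO : #lam.ord.ToType = lam := by rw [Cardinal.mk_toType, Cardinal.card_ord]
  have hK : #kap.ord.ToType = kap := by rw [Cardinal.mk_toType, Cardinal.card_ord]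
  have hKK : #(kap.ord.ToType ⊕ kap.ord.ToType) = #kap.ord.ToType := by
    rw [Cardinal.mk_sum, hK, Cardinal.lift_id]
    exact Cardinal.add_eq_self h0
  obtain ⟨q⟩ := Cardinal.eq.mp hKK
  set S : Set kap.ord.ToType := Set.range (⇑q ∘ Sum.inl) with hSdef
  set S' : Set kap.ord.ToType := Set.range (⇑q ∘ Sum.inr) with hS'def
  have hdS : Disjoint S S' := by
    rw [Set.disjoint_left]
    rintro x ⟨a, rfl⟩ ⟨b, hb⟩
    have := q.injective hb
    simp at this
  have hSk : #S = kap := by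
    rw [hSdef, Cardinal.mk_range_eq _ (q.injective.comp Sum.inl_injective), hK]
  have hS'k : #S' = kap := by
    rw [hS'def, Cardinal.mk_range_eq _ (q.injective.comp Sum.inr_injective), hK]
  have hchoice : ∀ η : kap.ord.ToType → lam.ord.ToType, ∃ Bs, S ⊆ Bs ∧
      (Function.Injective η → ∀ v, {i | Gstar.Adj v (η i)} ≠ Bs) := by
    intro η
    by_cases hinj : Function.Injective η
    · obtain ⟨Bs, hb1, hb2⟩ := exists_block h0 h1 h2 Gstar hGstar S S' hdS hSk hS'k η hinj
      exact ⟨Bs, hb1, fun _ => hb2⟩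
    · exact ⟨S, subset_rfl, fun h => absurd h hinj⟩
  choose Bfun hBsub hBblock using hchoice
  have hV : #(AuxV lam kap) = #lam.ord.ToType := by rw [mk_auxV h0 hlamk h4, hO]
  obtain ⟨e⟩ := Cardinal.eq.mp hV
  refine ⟨SimpleGraph.comap (⇑e.symm) (auxG Bfun), ?_, ?_, ?_⟩
  · -- NoKbip
    rintro ⟨A, C, hd, hA, hC, hadj⟩
    refine auxG_nokbip h0 h1 Bfun ⟨e.symm '' A, e.symm '' C, ?_, ?_, ?_, ?_⟩
    · exact (Set.disjoint_image_iff e.symm.injective).mpr hd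
    · rw [Cardinal.mk_image_eq e.symm.injective]; exact hA
    · rw [Cardinal.mk_image_eq e.symm.injective]; exact hC
    · rintro a ⟨a0, ha0, rfl⟩ b ⟨b0, hb0, rfl⟩
      exact hadj a0 ha0 b0 hb0
  · -- bipartite
    refine ⟨{a | ∃ p, e.symm a = Sum.inl p}, ?_⟩
    intro a b hab
    have hab' : (auxG Bfun).Adj (e.symm a) (e.symm b) := hab
    rcases hab' with ⟨η0, i, h1', h2', _⟩ | ⟨η0, i, h1', h2', _⟩
    · exact iff_of_true ⟨_, h1'⟩
        (by rintro ⟨p, hp⟩; rw [h2'] at hp; simp at hp)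
    · exact iff_of_false
        (by rintro ⟨p, hp⟩; rw [h2'] at hp; simp at hp)
        (not_not_intro ⟨_, h1'⟩)
  · -- no strong embedding
    intro f hf
    set F : AuxV lam kap → lam.ord.ToType := f ∘ ⇑e with hFdef
    have hF : StrongEmb (auxG Bfun) Gstar F := by
      constructor
      · exact hf.1.comp e.injective
      · intro u w
        have h := hf.2 (e u) (e w)
        simpa [hFdef] using h
    haveI iwf : WellFoundedLT kap.ord.ToType := wellFoundedLT_toType _
    set η : kap.ord.ToType → lam.ord.ToType :=
      IsWellFounded.fix (· < ·) (fun i IH => F (Sum.inl ⟨i, fun j => IH j.1 j.2⟩)) with hηdef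
    have heta : ∀ i, η i = F (auxNode η i) := by
      intro i
      rw [hηdef]
      exact IsWellFounded.fix_eq (· < ·) _ i
    have hηinj : Function.Injective η := by
      intro i i' hii
      rw [heta i, heta i'] at hii
      exact auxNode_fst (hF.1 hii)
    apply hBblock η hηinj (F (Sum.inr η))
    ext i
    simp only [Set.mem_setOf_eq]
    constructor
    · intro h
      rw [heta i] at h
      have h2' := (hF.2 (Sum.inr η) (auxNode η i)).mpr h
      rcases h2' with ⟨η0, i0, habs, _, _⟩ | ⟨η0, i0, heq1, heq2, hi0⟩
      · simp [auxNode] at habs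
      · obtain rfl : η0 = η := (Sum.inr_injective heq2).symm
        obtain rfl : i0 = i := (auxNode_fst heq1).symm
        exact hi0
    · intro h
      rw [heta i]
      exact (hF.2 (Sum.inr η) (auxNode η i)).mp (Or.inr ⟨η, i, rfl, rfl, h⟩)
end
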